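/- arXiv:1501.00577 — 4 statements merged into one kernel-verified Lean document; each statement's English description precedes it below -/
import Mathlib

section
/- Let N ≥ 1 and let q : I → ℝᴺ be an L² function such that q⁻¹(0) has Lebesgue measure 0. Then there exists an orthonormal basis u₁, …, u_N of ℝᴺ such that, writing H_k for the hyperplane u_k^⊥ (the orthogonal complement of u_k), the set q⁻¹(H_k) has Lebesgue measure 0 for every k = 1, …, N. (The hyperplanes H₁, …, H_N are pairwise orthogonal in the sense that their unit normals u₁, …, u_N are pairwise orthogonal.) -/
open MeasureTheory Set Filter

noncomputable section

/-- Lebesgue measure restricted to the unit interval `I = [0,1]`. -/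
def μ01 : Measure ℝ := volume.restrict (Set.Icc (0:ℝ) 1)

/-- An element of the reparametrization semigroup `Γ̃`: an absolutely continuous
`γ : I → I` with `γ 0 = 0`, `γ 1 = 1`, and `γ' ≥ 0` a.e.; absolute continuity is
encoded by the data of an integrable a.e. derivative `deriv'` with
`γ t = ∫₀ᵗ deriv'`. -/
structure GammaTilde where
  toFun : ℝ → ℝ
  deriv' : ℝ → ℝ
  integrableOn : IntegrableOn deriv' (Set.Icc (0:ℝ) 1) volume
  nonneg : ∀ᵐ t ∂μ01, 0 ≤ deriv' t
  map_zero : toFun 0 = 0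
  map_one : toFun 1 = 1
  eq_integral : ∀ t ∈ Set.Icc (0:ℝ) 1, toFun t = ∫ u in (0:ℝ)..t, deriv' u

/-- `γ ∈ Γ` iff moreover `γ' > 0` almost everywhere. -/
def GammaTilde.IsInGamma (γ : GammaTilde) : Prop := ∀ᵐ t ∂μ01, 0 < γ.deriv' t

variable {E : Type*} [NormedAddCommGroup E] [InnerProductSpace ℝ E]

/-- The right action `(q*γ)(t) = √(γ'(t)) • q(γ(t))`. -/
def act (q : ℝ → E) (γ : GammaTilde) : ℝ → E :=
  fun t => Real.sqrt (γ.deriv' t) • q (γ.toFun t)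

/-- The `L²(I)` inner product `⟨f,g⟩ = ∫₀¹ f·g`. -/
def L2inner (f g : ℝ → E) : ℝ := ∫ t in Set.Icc (0:ℝ) 1, (inner ℝ (f t) (g t) : ℝ)

/-- The `L²(I)` distance. -/
def L2dist (f g : ℝ → E) : ℝ := Real.sqrt (∫ t in Set.Icc (0:ℝ) 1, ‖f t - g t‖^2)

/-- The orbit `qΓ` of `q` under `Γ` (up to a.e. equality, as befits `L²`). -/
def orbit (q : ℝ → E) : Set (ℝ → E) :=
  {p | ∃ γ : GammaTilde, γ.IsInGamma ∧ p =ᵐ[μ01] act q γ}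

/-- The orbit `qΓ̃` of `q` under the semigroup `Γ̃` (up to a.e. equality). -/
def orbitTilde (q : ℝ → E) : Set (ℝ → E) :=
  {p | ∃ γ : GammaTilde, p =ᵐ[μ01] act q γ}

/-- The closure `[q]` of `qΓ` in `L²(I)`. -/
def orbitClosure (q : ℝ → E) : Set (ℝ → E) :=
  {p | MemLp p 2 μ01 ∧ ∀ ε > 0, ∃ r ∈ orbit q, L2dist r p < ε}


namespace OHyp


def uu (N : ℕ) (k i : ℕ) : ℝ :=
  if N = 2 then (if k = 0 then Real.sqrt 2 / 2 else if i = 0 then -(Real.sqrt 2 / 2) else Real.sqrt 2 / 2)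
  else (if i = k then (1:ℝ) else 0) - 2 / N

def bb (N : ℕ) (s : ℝ) (k i : ℕ) : ℝ :=
  if i < 2 * (N / 2) then
    (if i % 2 = 0 then
      Real.cos ((i / 2 + 1 : ℕ) * s) * uu N k i - Real.sin ((i / 2 + 1 : ℕ) * s) * uu N k (i + 1)
    else
      Real.sin ((i / 2 + 1 : ℕ) * s) * uu N k (i - 1) + Real.cos ((i / 2 + 1 : ℕ) * s) * uu N k i)
  else uu N k i

lemma uu_ne_zero {N k i : ℕ} (hN : 1 ≤ N) (hk : k < N) (hi : i < N) : uu N k i ≠ 0 := by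
  have hNpos : (0:ℝ) < N := by exact_mod_cast hN
  unfold uu
  split_ifs with h2 hk0 hi0 hik
  · positivity
  · simp only [neg_ne_zero]; positivity
  · positivity
  · -- i = k case, N ≠ 2
    intro hc
    have h1 : (2:ℝ) / N = 1 := by linarith
    rw [div_eq_one_iff_eq (ne_of_gt hNpos)] at h1
    exact h2 (by exact_mod_cast h1.symm)
  · -- i ≠ k
    intro hc
    have : (2:ℝ) / N = 0 := by linarith
    rw [div_eq_zero_iff] at this
    rcases this with h | h
    · norm_num at h
    · exact absurd h (ne_of_gt hNpos)

lemma sum_range_pair (m : ℕ) (f : ℕ → ℝ) :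
    ∑ i ∈ Finset.range (2 * m), f i = ∑ j ∈ Finset.range m, (f (2 * j) + f (2 * j + 1)) := by
  induction m with
  | zero => simp
  | succ n ih =>
    have h : 2 * (n + 1) = (2 * n + 1) + 1 := by ring
    rw [h, Finset.sum_range_succ, Finset.sum_range_succ, ih, Finset.sum_range_succ, add_assoc]

lemma uu_orthonormal {N k l : ℕ} (hN : 1 ≤ N) (hk : k < N) (hl : l < N) :
    ∑ i ∈ Finset.range N, uu N k i * uu N l i = if k = l then 1 else 0 := by
  have hNpos : (0:ℝ) < N := by exact_mod_cast hN
  by_cases h2 : N = 2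
  · subst h2
    have key : Real.sqrt 2 / 2 * (Real.sqrt 2 / 2) = 1 / 2 := by
      have := Real.mul_self_sqrt (le_of_lt (by norm_num : (0:ℝ) < 2))
      nlinarith [this]
    interval_cases k <;> interval_cases l <;>
      · simp only [uu, Finset.sum_range_succ, Finset.sum_range_zero]
        norm_num [key]
        try nlinarith [key]
  · simp only [uu, if_neg h2]
    have expand : ∀ i ∈ Finset.range N,
        ((if i = k then (1:ℝ) else 0) - 2 / N) * ((if i = l then (1:ℝ) else 0) - 2 / N)
        = ((if i = k then (1:ℝ) else 0) * (if i = l then (1:ℝ) else 0)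
          - (2 / N) * (if i = k then (1:ℝ) else 0)) - ((2 / N) * (if i = l then (1:ℝ) else 0)
          - (2 / N) * (2 / N)) := by
      intro i _; ring
    rw [Finset.sum_congr rfl expand, Finset.sum_sub_distrib, Finset.sum_sub_distrib,
      Finset.sum_sub_distrib]
    have e1 : ∑ i ∈ Finset.range N, (if i = k then (1:ℝ) else 0) * (if i = l then (1:ℝ) else 0)
        = if k = l then 1 else 0 := by
      simp only [ite_mul, one_mul, zero_mul]
      rw [Finset.sum_ite_eq' (Finset.range N) k (fun i => if i = l then (1:ℝ) else 0)]
      simp [Finset.mem_range.mpr hk]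
    have e2 : ∑ i ∈ Finset.range N, (2 / (N:ℝ)) * (if i = k then (1:ℝ) else 0) = 2 / N := by
      simp [mul_ite, Finset.sum_ite_eq' (Finset.range N) k, Finset.mem_range.mpr hk]
    have e3 : ∑ i ∈ Finset.range N, (2 / (N:ℝ)) * (if i = l then (1:ℝ) else 0) = 2 / N := by
      simp [mul_ite, Finset.sum_ite_eq' (Finset.range N) l, Finset.mem_range.mpr hl]
    rw [e1, e2, e3, Finset.sum_const, Finset.card_range, nsmul_eq_mul]
    have : (N:ℝ) * (2 / N * (2 / N)) = 2 * (2 / N) := by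
      field_simp
    rw [this]; ring





variable {N j k l : ℕ} {s : ℝ}

lemma bb_two_mul (hj : j < N / 2) (s : ℝ) (k : ℕ) :
    bb N s k (2 * j) = Real.cos ((j + 1 : ℕ) * s) * uu N k (2 * j)
      - Real.sin ((j + 1 : ℕ) * s) * uu N k (2 * j + 1) := by
  have h1 : 2 * j < 2 * (N / 2) := by omega
  have h2 : (2 * j) % 2 = 0 := by omega
  have h3 : (2 * j) / 2 = j := by omega
  simp [bb, h1, h2, h3]

lemma bb_two_mul_add_one (hj : j < N / 2) (s : ℝ) (k : ℕ) :
    bb N s k (2 * j + 1) = Real.sin ((j + 1 : ℕ) * s) * uu N k (2 * j)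
      + Real.cos ((j + 1 : ℕ) * s) * uu N k (2 * j + 1) := by
  have h1 : 2 * j + 1 < 2 * (N / 2) := by omega
  have h2 : (2 * j + 1) % 2 = 1 := by omega
  have h3 : (2 * j + 1) / 2 = j := by omega
  simp [bb, h1, h2, h3]

lemma bb_last {i : ℕ} (hi : 2 * (N / 2) ≤ i) (s : ℝ) (k : ℕ) : bb N s k i = uu N k i := by
  simp [bb, Nat.not_lt.mpr hi]

lemma sum_split (N : ℕ) (g : ℕ → ℝ) :
    ∑ i ∈ Finset.range N, g i
      = ∑ i ∈ Finset.range (2 * (N / 2)), g i + ∑ i ∈ Finset.Ico (2 * (N / 2)) N, g i := by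
  simp only [Finset.range_eq_Ico]
  exact (Finset.sum_Ico_consecutive _ (Nat.zero_le _) (by omega)).symm

lemma bb_inner (s : ℝ) (k l : ℕ) :
    ∑ i ∈ Finset.range N, bb N s k i * bb N s l i
      = ∑ i ∈ Finset.range N, uu N k i * uu N l i := by
  rw [sum_split N (fun i => bb N s k i * bb N s l i), sum_split N (fun i => uu N k i * uu N l i)]
  congr 1
  · rw [sum_range_pair, sum_range_pair]
    apply Finset.sum_congr rfl
    intro j hj
    have hj' : j < N / 2 := Finset.mem_range.mp hj
    rw [bb_two_mul hj', bb_two_mul_add_one hj', bb_two_mul hj', bb_two_mul_add_one hj']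
    have htrig := Real.sin_sq_add_cos_sq (((j + 1 : ℕ) : ℝ) * s)
    linear_combination (uu N k (2 * j) * uu N l (2 * j)
      + uu N k (2 * j + 1) * uu N l (2 * j + 1)) * htrig
  · apply Finset.sum_congr rfl
    intro i hi
    rw [bb_last (Finset.mem_Ico.mp hi).1, bb_last (Finset.mem_Ico.mp hi).1]

/-- the expansion of `⟨b_k(s), v⟩` as a trigonometric polynomial -/
lemma bb_sum_eq (s : ℝ) (k : ℕ) (v : ℕ → ℝ) :
    ∑ i ∈ Finset.range N, bb N s k i * v i
      = (∑ j ∈ Finset.range (N / 2),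
          (Real.cos ((j + 1 : ℕ) * s) * (uu N k (2 * j) * v (2 * j) + uu N k (2 * j + 1) * v (2 * j + 1))
           + Real.sin ((j + 1 : ℕ) * s) * (uu N k (2 * j) * v (2 * j + 1) - uu N k (2 * j + 1) * v (2 * j))))
        + ∑ i ∈ Finset.Ico (2 * (N / 2)) N, uu N k i * v i := by
  rw [sum_split N (fun i => bb N s k i * v i)]
  congr 1
  · rw [sum_range_pair]
    apply Finset.sum_congr rfl
    intro j hj
    have hj' : j < N / 2 := Finset.mem_range.mp hj
    rw [bb_two_mul hj', bb_two_mul_add_one hj']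
    ring
  · apply Finset.sum_congr rfl
    intro i hi
    rw [bb_last (Finset.mem_Ico.mp hi).1]




lemma countable_exp_eq (z : ℂ) : {s : ℝ | Complex.exp (↑s * Complex.I) = z}.Countable := by
  by_cases h : ∃ s₀ : ℝ, Complex.exp (↑s₀ * Complex.I) = z
  · obtain ⟨s₀, hs₀⟩ := h
    apply Set.Countable.mono _ (Set.countable_range (fun n : ℤ => s₀ + n * (2 * Real.pi)))
    intro s hs
    have hss : Complex.exp (↑s * Complex.I) = Complex.exp (↑s₀ * Complex.I) := by
      rw [hs, hs₀]
    obtain ⟨n, hn⟩ := Complex.exp_eq_exp_iff_exists_int.mp hss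
    refine ⟨n, ?_⟩
    have h2 : ((s₀ + n * (2 * Real.pi) : ℝ) : ℂ) * Complex.I = (s : ℂ) * Complex.I := by
      push_cast
      rw [hn]; ring
    have h3 := mul_right_cancel₀ Complex.I_ne_zero h2
    exact_mod_cast h3
  · convert Set.countable_empty
    rw [Set.eq_empty_iff_forall_notMem]
    intro s hs
    exact h ⟨s, hs⟩

/-- term-by-term evaluation -/
lemma term_eval {m j : ℕ} (hj : j < m) (s : ℝ) (a d : ℝ) :
    ((a : ℂ) - d * Complex.I) / 2 * Complex.exp (↑s * Complex.I) ^ (m + j + 1)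
      + ((a : ℂ) + d * Complex.I) / 2 * Complex.exp (↑s * Complex.I) ^ (m - (j + 1))
    = Complex.exp (↑s * Complex.I) ^ m
        * ((Real.cos ((j + 1 : ℕ) * s) * a + Real.sin ((j + 1 : ℕ) * s) * d : ℝ) : ℂ) := by
  set e := Complex.exp (↑s * Complex.I) with he
  set θ : ℝ := ((j + 1 : ℕ) : ℝ) * s with hθ
  have hE : e ^ (j + 1) = ((Real.cos θ : ℂ) + (Real.sin θ : ℂ) * Complex.I) := by
    rw [he, ← Complex.exp_nat_mul]
    have : ((j + 1 : ℕ) : ℂ) * (↑s * Complex.I) = (θ : ℂ) * Complex.I := by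
      rw [hθ]; push_cast; ring
    rw [this, Complex.exp_mul_I, Complex.ofReal_cos, Complex.ofReal_sin]
  have hunit : ((Real.cos θ : ℂ) + (Real.sin θ : ℂ) * Complex.I)
      * ((Real.cos θ : ℂ) - (Real.sin θ : ℂ) * Complex.I) = 1 := by
    rw [Complex.ofReal_cos, Complex.ofReal_sin]
    have h := Complex.sin_sq_add_cos_sq (θ : ℂ)
    linear_combination h - Complex.sin (θ : ℂ) ^ 2 * Complex.I_sq
  have h1 : e ^ (m + j + 1) = e ^ m * ((Real.cos θ : ℂ) + (Real.sin θ : ℂ) * Complex.I) := by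
    rw [show m + j + 1 = m + (j + 1) from by omega, pow_add, hE]
  have h2 : e ^ (m - (j + 1)) = e ^ m * ((Real.cos θ : ℂ) - (Real.sin θ : ℂ) * Complex.I) := by
    have hm : m - (j + 1) + (j + 1) = m := by omega
    have hprod : e ^ (m - (j + 1)) * e ^ (j + 1) = e ^ m := by rw [← pow_add, hm]
    calc e ^ (m - (j + 1))
        = e ^ (m - (j + 1)) * (((Real.cos θ : ℂ) + (Real.sin θ : ℂ) * Complex.I)
            * ((Real.cos θ : ℂ) - (Real.sin θ : ℂ) * Complex.I)) := by rw [hunit, mul_one]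
      _ = (e ^ (m - (j + 1)) * e ^ (j + 1)) * ((Real.cos θ : ℂ) - (Real.sin θ : ℂ) * Complex.I) := by
            rw [hE]; ring
      _ = e ^ m * ((Real.cos θ : ℂ) - (Real.sin θ : ℂ) * Complex.I) := by rw [hprod]
  rw [h1, h2, Complex.ofReal_add, Complex.ofReal_mul, Complex.ofReal_mul]
  linear_combination (-(d : ℂ) * (Real.sin θ : ℂ) * e ^ m) * Complex.I_sq

lemma trig_zero_countable (m : ℕ) (a d : ℕ → ℝ) (c₀ : ℝ)
    (hne : c₀ ≠ 0 ∨ ∃ j < m, a j ≠ 0 ∨ d j ≠ 0) :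
    {s : ℝ | c₀ + ∑ j ∈ Finset.range m,
      (Real.cos ((j + 1 : ℕ) * s) * a j + Real.sin ((j + 1 : ℕ) * s) * d j) = 0}.Countable := by
  classical
  set Q : Polynomial ℂ := Polynomial.C (c₀ : ℂ) * Polynomial.X ^ m
    + ∑ j ∈ Finset.range m,
        (Polynomial.C (((a j : ℂ) - d j * Complex.I) / 2) * Polynomial.X ^ (m + j + 1)
          + Polynomial.C (((a j : ℂ) + d j * Complex.I) / 2) * Polynomial.X ^ (m - (j + 1)))
    with hQ
  have hQeval : ∀ s : ℝ, Q.eval (Complex.exp (↑s * Complex.I))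
      = Complex.exp (↑s * Complex.I) ^ m
        * ((c₀ + ∑ j ∈ Finset.range m,
            (Real.cos ((j + 1 : ℕ) * s) * a j + Real.sin ((j + 1 : ℕ) * s) * d j) : ℝ) : ℂ) := by
    intro s
    rw [hQ]
    simp only [Polynomial.eval_add, Polynomial.eval_mul, Polynomial.eval_C, Polynomial.eval_pow,
      Polynomial.eval_X, Polynomial.eval_finset_sum]
    have hterm : ∀ j ∈ Finset.range m,
        ((a j : ℂ) - d j * Complex.I) / 2 * Complex.exp (↑s * Complex.I) ^ (m + j + 1)
          + ((a j : ℂ) + d j * Complex.I) / 2 * Complex.exp (↑s * Complex.I) ^ (m - (j + 1))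
        = Complex.exp (↑s * Complex.I) ^ m
            * ((Real.cos ((j + 1 : ℕ) * s) * a j + Real.sin ((j + 1 : ℕ) * s) * d j : ℝ) : ℂ) :=
      fun j hj => term_eval (Finset.mem_range.mp hj) s (a j) (d j)
    rw [Finset.sum_congr rfl hterm, ← Finset.mul_sum]
    push_cast
    ring
  have hQne : Q ≠ 0 := by
    rcases hne with hc | ⟨j₀, hj₀, had⟩
    · intro hQ0
      have hcoeff : Q.coeff m = (c₀ : ℂ) := by
        rw [hQ]
        simp only [Polynomial.coeff_add, Polynomial.coeff_C_mul, Polynomial.coeff_X_pow,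
          Polynomial.finset_sum_coeff]
        rw [Finset.sum_eq_zero]
        · simp
        · intro j hj
          have hj' : j < m := Finset.mem_range.mp hj
          rw [if_neg (by omega), if_neg (by omega)]
          simp
      rw [hQ0] at hcoeff
      simp only [Polynomial.coeff_zero] at hcoeff
      exact hc (by exact_mod_cast hcoeff.symm)
    · intro hQ0
      have hcoeff : Q.coeff (m + j₀ + 1) = ((a j₀ : ℂ) - d j₀ * Complex.I) / 2 := by
        rw [hQ]
        simp only [Polynomial.coeff_add, Polynomial.coeff_C_mul, Polynomial.coeff_X_pow,
          Polynomial.finset_sum_coeff]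
        rw [if_neg (by omega), Finset.sum_eq_single j₀]
        · rw [if_pos rfl, if_neg (by omega)]
          simp
        · intro j hj hjne
          have hj' : j < m := Finset.mem_range.mp hj
          rw [if_neg (by omega), if_neg (by omega)]
          simp
        · intro habs
          exact absurd (Finset.mem_range.mpr hj₀) habs
      rw [hQ0] at hcoeff
      simp only [Polynomial.coeff_zero] at hcoeff
      have : (a j₀ : ℂ) - d j₀ * Complex.I = 0 := by
        field_simp at hcoeff
        rw [zero_mul] at hcoeff
        exact hcoeff.symm
      have hre : a j₀ = 0 := by
        have := congrArg Complex.re this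
        simpa using this
      have him : d j₀ = 0 := by
        have := congrArg Complex.im this
        simpa using this
      rcases had with h | h
      · exact h hre
      · exact h him
  apply Set.Countable.mono _
    (Set.Countable.biUnion ((Polynomial.finite_setOf_isRoot hQne).countable)
      (fun z _ => countable_exp_eq z))
  intro s hs
  simp only [Set.mem_setOf_eq] at hs
  refine Set.mem_biUnion (?_ : Complex.exp (↑s * Complex.I) ∈ {x | Q.IsRoot x}) rfl
  simp only [Set.mem_setOf_eq, Polynomial.IsRoot]
  rw [hQeval s, hs]
  simp


lemma pair_ne_zero {x y p q : ℝ} (hx : x ≠ 0) (hy : y ≠ 0) (hpq : p ≠ 0 ∨ q ≠ 0) :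
    x * p + y * q ≠ 0 ∨ x * q - y * p ≠ 0 := by
  by_contra hC
  push_neg at hC
  obtain ⟨h1, h2⟩ := hC
  have hs : x ^ 2 + y ^ 2 ≠ 0 := by positivity
  have e1 : (x ^ 2 + y ^ 2) * p = x * (x * p + y * q) - y * (x * q - y * p) := by ring
  have e2 : (x ^ 2 + y ^ 2) * q = y * (x * p + y * q) + x * (x * q - y * p) := by ring
  rw [h1, h2] at e1 e2
  simp only [mul_zero, sub_zero, zero_add, add_zero, zero_sub, neg_zero] at e1 e2
  rcases hpq with h | h
  · rcases mul_eq_zero.mp e1 with h' | h'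
    · exact hs h'
    · exact h h'
  · rcases mul_eq_zero.mp e2 with h' | h'
    · exact hs h'
    · exact h h'

lemma null_slice {N k : ℕ} (hN : 1 ≤ N) (hk : k < N) (v : ℕ → ℝ)
    (hv : ∃ i, i < N ∧ v i ≠ 0) :
    volume {s : ℝ | ∑ i ∈ Finset.range N, bb N s k i * v i = 0} = 0 := by
  obtain ⟨i, hiN, hvi⟩ := hv
  set m := N / 2 with hm
  set A : ℕ → ℝ := fun j => uu N k (2 * j) * v (2 * j) + uu N k (2 * j + 1) * v (2 * j + 1) with hA
  set D : ℕ → ℝ := fun j => uu N k (2 * j) * v (2 * j + 1) - uu N k (2 * j + 1) * v (2 * j) with hD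
  set c₀ : ℝ := ∑ i ∈ Finset.Ico (2 * m) N, uu N k i * v i with hc₀
  have hne : c₀ ≠ 0 ∨ ∃ j < m, A j ≠ 0 ∨ D j ≠ 0 := by
    by_cases hi2 : i < 2 * m
    · right
      refine ⟨i / 2, by omega, ?_⟩
      rw [hA, hD]
      simp only
      have hx : uu N k (2 * (i / 2)) ≠ 0 := uu_ne_zero hN hk (by omega)
      have hy : uu N k (2 * (i / 2) + 1) ≠ 0 := uu_ne_zero hN hk (by omega)
      apply pair_ne_zero hx hy
      rcases Nat.even_or_odd i with he | ho
      · obtain ⟨r, hr⟩ := he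
        left; rwa [show 2 * (i / 2) = i from by omega]
      · obtain ⟨r, hr⟩ := ho
        right; rwa [show 2 * (i / 2) + 1 = i from by omega]
    · left
      have hNodd : N = 2 * m + 1 := by omega
      have hi' : i = 2 * m := by omega
      have hIco : Finset.Ico (2 * m) N = {2 * m} := by
        ext x
        simp only [Finset.mem_Ico, Finset.mem_singleton]
        omega
      rw [hc₀, hIco, Finset.sum_singleton]
      exact mul_ne_zero (uu_ne_zero hN hk (by omega)) (hi' ▸ hvi)
  have hcount := trig_zero_countable m A D c₀ hne
  have hseteq : {s : ℝ | ∑ i ∈ Finset.range N, bb N s k i * v i = 0}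
      = {s : ℝ | c₀ + ∑ j ∈ Finset.range m,
          (Real.cos ((j + 1 : ℕ) * s) * A j + Real.sin ((j + 1 : ℕ) * s) * D j) = 0} := by
    ext s
    simp only [Set.mem_setOf_eq]
    rw [bb_sum_eq s k v, hA, hD]
    simp only
    constructor <;> intro h <;> linarith
  rw [hseteq]
  exact hcount.measure_zero _



lemma bb_measurable (N k i : ℕ) : Measurable (fun s : ℝ => bb N s k i) := by
  unfold bb
  by_cases h1 : i < 2 * (N / 2)
  · by_cases h2 : i % 2 = 0
    · simp only [if_pos h1, if_pos h2]
      fun_prop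
    · simp only [if_pos h1, if_neg h2]
      fun_prop
  · simp only [if_neg h1]
    exact measurable_const

end OHyp

open OHyp Finset

/-- if `q ∈ L²(I,ℝᴺ)` and `q⁻¹(0)` has measure zero, then there
are `N` pairwise orthogonal hyperplanes `H_k = u_k^⊥` (with `u₁, …, u_N` an
orthonormal basis of `ℝᴺ`) such that each `q⁻¹(H_k)` has measure zero. -/
theorem orthogonal_hyperplanes_of_null_zero_set (N : ℕ) (hN : 1 ≤ N)
    (q : ℝ → EuclideanSpace ℝ (Fin N)) (hq : MemLp q 2 μ01)
    (h0 : volume {t ∈ Set.Icc (0:ℝ) 1 | q t = 0} = 0) :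
    ∃ b : OrthonormalBasis (Fin N) ℝ (EuclideanSpace ℝ (Fin N)),
      ∀ k : Fin N,
        volume {t ∈ Set.Icc (0:ℝ) 1 | (inner ℝ (b k) (q t) : ℝ) = 0} = 0 := by

  classical
  haveI : SFinite μ01 := by unfold μ01; infer_instance
  have hqm : AEStronglyMeasurable q μ01 := hq.aestronglyMeasurable
  set q' : ℝ → EuclideanSpace ℝ (Fin N) := hqm.mk q with hq'def
  have hq'sm : StronglyMeasurable q' := hqm.stronglyMeasurable_mk
  have hqq' : q =ᵐ[μ01] q' := hqm.ae_eq_mk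
  -- measurable coordinate evaluations
  have hq'i : ∀ i : Fin N, Measurable (fun t => q' t i) := by
    intro i
    exact (measurable_pi_apply i).comp ((WithLp.measurable_ofLp _ _).comp hq'sm.measurable)
  -- the product-space sets
  set G : Fin N → ℝ × ℝ → ℝ :=
    fun k p => ∑ i : Fin N, bb N p.2 k.val i.val * q' p.1 i with hGdef
  have hGmeas : ∀ k, Measurable (G k) := by
    intro k
    apply Finset.measurable_sum
    intro i _
    exact ((bb_measurable N k.val i.val).comp measurable_snd).mul
      ((hq'i i).comp measurable_fst)
  set V : Fin N → Set (ℝ × ℝ) := fun k => {p | G k p = 0 ∧ q' p.1 ≠ 0} with hVdef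
  have hVmeas : ∀ k, MeasurableSet (V k) := by
    intro k
    apply MeasurableSet.inter
    · exact (hGmeas k) (measurableSet_singleton 0)
    · exact ((hq'sm.measurable.comp measurable_fst) (measurableSet_singleton 0)).compl
  -- slices in s are null for every t
  have hslice : ∀ k : Fin N, ∀ t : ℝ, μ01 (Prod.mk t ⁻¹' (V k)) = 0 := by
    intro k t
    by_cases hz : q' t = 0
    · have : Prod.mk t ⁻¹' (V k) = ∅ := by
        ext s; simp [hVdef, hz]
      rw [this]; simp
    · -- use null_slice with padded vector
      set v : ℕ → ℝ := fun n => if h : n < N then q' t ⟨n, h⟩ else 0 with hvdef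
      have hvi : ∀ i : Fin N, q' t i = v i.val := by
        intro i
        simp [hvdef, i.isLt]
      have hv : ∃ i, i < N ∧ v i ≠ 0 := by
        by_contra hC
        push_neg at hC
        apply hz
        ext i
        have := hC i.val i.isLt
        rw [hvi i] at *
        exact this
      have hsub : Prod.mk t ⁻¹' (V k)
          ⊆ {s : ℝ | ∑ i ∈ Finset.range N, bb N s k.val i * v i = 0} := by
        intro s hs
        simp only [hVdef, Set.mem_preimage, Set.mem_setOf_eq] at hs
        obtain ⟨hs1, -⟩ := hs
        simp only [Set.mem_setOf_eq]
        rw [← Fin.sum_univ_eq_sum_range (fun i => bb N s k.val i * v i) N]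
        rw [hGdef] at hs1
        simp only at hs1
        rw [← hs1]
        exact Finset.sum_congr rfl fun i _ => by rw [hvi i]
      have hle : μ01 (Prod.mk t ⁻¹' (V k)) ≤ volume {s : ℝ | ∑ i ∈ Finset.range N, bb N s k.val i * v i = 0} := by
        calc μ01 (Prod.mk t ⁻¹' (V k)) ≤ μ01 {s : ℝ | ∑ i ∈ Finset.range N, bb N s k.val i * v i = 0} :=
              measure_mono hsub
          _ ≤ volume {s : ℝ | ∑ i ∈ Finset.range N, bb N s k.val i * v i = 0} :=
              Measure.restrict_le_self _
      have := null_slice hN k.isLt v hv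
      exact le_antisymm (this ▸ hle) zero_le
  -- product measure null
  have hVnull : ∀ k, (μ01.prod μ01) (V k) = 0 := by
    intro k
    rw [MeasureTheory.Measure.measure_prod_null (hVmeas k)]
    filter_upwards with t
    exact hslice k t
  -- swap and get a.e. s
  have hW : ∀ k, (μ01.prod μ01) (Prod.swap ⁻¹' (V k)) = 0 := by
    intro k
    rw [(MeasureTheory.Measure.measurePreserving_swap (μ := μ01) (ν := μ01)).measure_preimage (hVmeas k).nullMeasurableSet]
    exact hVnull k
  have hae : ∀ᵐ s ∂μ01, ∀ k : Fin N, μ01 (Prod.mk s ⁻¹' (Prod.swap ⁻¹' (V k))) = 0 := by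
    rw [ae_all_iff]
    intro k
    exact MeasureTheory.Measure.measure_ae_null_of_prod_null (hW k)
  have hμne : (μ01 : Measure ℝ) ≠ 0 := by
    intro hc
    have : μ01 (Set.Icc (0:ℝ) 1) = 1 := by
      rw [μ01, Measure.restrict_apply' measurableSet_Icc]
      simp
    rw [hc] at this
    simp at this
  haveI : (ae μ01).NeBot := MeasureTheory.ae_neBot.mpr hμne
  obtain ⟨s₀, hs₀⟩ := hae.exists
  -- build the orthonormal basis
  set w : Fin N → EuclideanSpace ℝ (Fin N) := fun k => WithLp.toLp 2 (fun i : Fin N => bb N s₀ k.val i.val) with hwdef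
  have hortho : Orthonormal ℝ w := by
    rw [orthonormal_iff_ite]
    intro k l
    have hip : (inner ℝ (w k) (w l) : ℝ)
        = ∑ i : Fin N, bb N s₀ k.val i.val * bb N s₀ l.val i.val := by
      simp [PiLp.inner_apply, RCLike.inner_apply, hwdef, mul_comm]
    rw [hip, Fin.sum_univ_eq_sum_range (fun i => bb N s₀ k.val i * bb N s₀ l.val i) N,
      bb_inner, uu_orthonormal hN k.isLt l.isLt]
    simp [Fin.val_eq_val]
  haveI : Nonempty (Fin N) := ⟨⟨0, hN⟩⟩
  have hcard : Fintype.card (Fin N) = Module.finrank ℝ (EuclideanSpace ℝ (Fin N)) := by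
    simp [finrank_euclideanSpace]
  let B := basisOfOrthonormalOfCardEqFinrank hortho hcard
  have hB : ⇑B = w := coe_basisOfOrthonormalOfCardEqFinrank hortho hcard
  have hBo : Orthonormal ℝ ⇑B := by rwa [hB]
  let b := B.toOrthonormalBasis hBo
  have hbk : ∀ k, b k = w k := by
    intro k
    have : ⇑b = ⇑B := Module.Basis.coe_toOrthonormalBasis B hBo
    rw [this, hB]
  refine ⟨b, ?_⟩
  intro k
  -- inner product formula
  have hinner : ∀ x : EuclideanSpace ℝ (Fin N),
      (inner ℝ (b k) x : ℝ) = ∑ i : Fin N, bb N s₀ k.val i.val * x i := by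
    intro x
    rw [hbk k]
    simp [PiLp.inner_apply, RCLike.inner_apply, hwdef, mul_comm]
  -- the three null sets
  have hS1 : μ01 {t : ℝ | G k (t, s₀) = 0 ∧ q' t ≠ 0} = 0 := by
    have := hs₀ k
    have heq : Prod.mk s₀ ⁻¹' (Prod.swap ⁻¹' V k) = {t : ℝ | G k (t, s₀) = 0 ∧ q' t ≠ 0} := by
      ext t
      simp [hVdef]
    rwa [heq] at this
  have hS3 : μ01 {t : ℝ | ¬ q t = q' t} = 0 := ae_iff.mp hqq'
  have hq0 : μ01 {t : ℝ | q t = 0} = 0 := by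
    have heq : {t : ℝ | q t = 0} ∩ Set.Icc (0:ℝ) 1 = {t | t ∈ Set.Icc (0:ℝ) 1 ∧ q t = 0} := by
      ext t; exact and_comm
    rw [μ01, Measure.restrict_apply' measurableSet_Icc, heq]
    exact h0
  have hS2 : μ01 {t : ℝ | q' t = 0} = 0 := by
    apply measure_mono_null (t := {t : ℝ | q t = 0} ∪ {t : ℝ | ¬ q t = q' t})
    · intro t ht
      by_cases hqt : q t = q' t
      · left; rw [Set.mem_setOf_eq, hqt]; exact ht
      · right; exact hqt
    · exact measure_union_null hq0 hS3
  have key : μ01 {t : ℝ | (inner ℝ (b k) (q t) : ℝ) = 0} = 0 := by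
    apply measure_mono_null (t := ({t : ℝ | G k (t, s₀) = 0 ∧ q' t ≠ 0}
      ∪ {t : ℝ | q' t = 0}) ∪ {t : ℝ | ¬ q t = q' t})
    · intro t ht
      simp only [Set.mem_setOf_eq] at ht
      by_cases hqt : q t = q' t
      · by_cases hz : q' t = 0
        · exact Or.inl (Or.inr hz)
        · refine Or.inl (Or.inl ⟨?_, hz⟩)
          have : G k (t, s₀) = (inner ℝ (b k) (q' t) : ℝ) := by
            rw [hinner (q' t), hGdef]
          rw [this, ← hqt]
          exact ht
      · exact Or.inr hqt
    · exact measure_union_null (measure_union_null hS1 hS2) hS3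
  have heq : {t | t ∈ Set.Icc (0:ℝ) 1 ∧ (inner ℝ (b k) (q t) : ℝ) = 0}
      = {t : ℝ | (inner ℝ (b k) (q t) : ℝ) = 0} ∩ Set.Icc (0:ℝ) 1 := by
    ext t; exact and_comm
  rw [heq, ← Measure.restrict_apply' measurableSet_Icc]
  exact key




end
end

section
/- Let q ∈ L²(I,ℝᴺ), written componentwise q(t) = (q₁(t), …, q_N(t)), and assume q⁻¹(0) has Lebesgue measure 0. Then there exists an orthogonal matrix A ∈ O(N,ℝ) such that, writing q̃(t) = A q(t) with components q̃₁, …, q̃_N, each set q̃_k⁻¹(0) has Lebesgue measure 0 for k = 1, …, N. -/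
open MeasureTheory Set

noncomputable section

namespace RotAux

open Matrix

instance : SFinite μ01 := by unfold μ01; infer_instance
instance : SigmaFinite μ01 := by unfold μ01; exact Restrict.sigmaFinite _ _

/-- A hyperplane through the origin is Lebesgue-null. -/
lemma null_hyperplane {n : ℕ} {w : Fin n → ℝ} (hw : w ≠ 0) :
    volume {u : Fin n → ℝ | w ⬝ᵥ u = 0} = 0 := by
  let φ : (Fin n → ℝ) →ₗ[ℝ] ℝ :=
    { toFun := fun u => w ⬝ᵥ u
      map_add' := fun x y => dotProduct_add _ _ _
      map_smul' := fun c x => by simp [dotProduct_smul] }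
  have hker : {u : Fin n → ℝ | w ⬝ᵥ u = 0} = (LinearMap.ker φ : Set (Fin n → ℝ)) := by
    ext u; simp [φ, LinearMap.mem_ker]
  rw [hker]
  apply Measure.addHaar_submodule
  intro htop
  have hmem : w ∈ LinearMap.ker φ := htop ▸ Submodule.mem_top
  rw [LinearMap.mem_ker] at hmem
  exact hw (dotProduct_self_eq_zero.mp hmem)

/-- A line through the origin in `ℝⁿ`, `n ≥ 2`, is Lebesgue-null. -/
lemma null_line {n : ℕ} (hn : 2 ≤ n) (w : Fin n → ℝ) :
    volume {u : Fin n → ℝ | ∃ c : ℝ, u = c • w} = 0 := by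
  have hset : {u : Fin n → ℝ | ∃ c : ℝ, u = c • w}
      = ((Submodule.span ℝ {w} : Submodule ℝ (Fin n → ℝ)) : Set (Fin n → ℝ)) := by
    ext u
    simp only [mem_setOf_eq, SetLike.mem_coe, Submodule.mem_span_singleton]
    constructor
    · rintro ⟨c, rfl⟩; exact ⟨c, rfl⟩
    · rintro ⟨c, rfl⟩; exact ⟨c, rfl⟩
  rw [hset]
  apply Measure.addHaar_submodule
  intro htop
  have hfr : Module.finrank ℝ (Fin n → ℝ) = n := by
    simp [Module.finrank_pi]
  rcases eq_or_ne w 0 with h0 | h0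
  · rw [h0, Submodule.span_zero_singleton] at htop
    have := finrank_bot ℝ (Fin n → ℝ)
    rw [htop, finrank_top, hfr] at this
    omega
  · have h1 := finrank_span_singleton (K := ℝ) h0
    rw [htop, finrank_top, hfr] at h1
    omega

lemma dot_self_pos {n : ℕ} {u : Fin n → ℝ} (hu : u ≠ 0) : 0 < u ⬝ᵥ u := by
  have h0 : u ⬝ᵥ u ≠ 0 := fun h => hu (dotProduct_self_eq_zero.mp h)
  have h1 : 0 ≤ u ⬝ᵥ u := Finset.sum_nonneg fun i _ => mul_self_nonneg _
  exact lt_of_le_of_ne h1 (Ne.symm h0)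

/-- Fubini: there is a direction `u` such that a.e. `t`, `r t` is neither orthogonal
nor parallel to `u`. -/
lemma exists_good {n : ℕ} (hn : 2 ≤ n) (r : ℝ → (Fin n → ℝ)) (hr : Measurable r)
    (h0 : μ01 {t | r t = 0} = 0) :
    ∃ u : Fin n → ℝ, u ≠ 0 ∧
      μ01 {t | u ⬝ᵥ r t = 0 ∨ ∃ c : ℝ, r t = c • u} = 0 := by
  classical
  set S : Set (ℝ × (Fin n → ℝ)) :=
    {p | r p.1 ≠ 0 ∧ p.2 ≠ 0 ∧
      (p.2 ⬝ᵥ r p.1 = 0 ∨ (p.2 ⬝ᵥ p.2) • r p.1 - (p.2 ⬝ᵥ r p.1) • p.2 = 0)} with hS_def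
  -- measurability
  have hmr : Measurable fun p : ℝ × (Fin n → ℝ) => r p.1 := hr.comp measurable_fst
  have hmdot : Measurable fun p : ℝ × (Fin n → ℝ) => p.2 ⬝ᵥ r p.1 := by
    apply Finset.measurable_sum
    intro i _
    exact ((measurable_pi_apply i).comp measurable_snd).mul
      ((measurable_pi_apply i).comp hmr)
  have hmdotself : Measurable fun p : ℝ × (Fin n → ℝ) => p.2 ⬝ᵥ p.2 := by
    apply Finset.measurable_sum
    intro i _
    exact ((measurable_pi_apply i).comp measurable_snd).mul
      ((measurable_pi_apply i).comp measurable_snd)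
  have hmvec : Measurable fun p : ℝ × (Fin n → ℝ) =>
      (p.2 ⬝ᵥ p.2) • r p.1 - (p.2 ⬝ᵥ r p.1) • p.2 := by
    rw [measurable_pi_iff]
    intro i
    exact (hmdotself.mul ((measurable_pi_apply i).comp hmr)).sub
      (hmdot.mul ((measurable_pi_apply i).comp measurable_snd))
  have hSmeas : MeasurableSet S := by
    apply MeasurableSet.inter
    · exact (hmr (measurableSet_singleton 0)).compl
    · apply MeasurableSet.inter
      · exact (measurable_snd (measurableSet_singleton 0)).compl
      · exact (hmdot (measurableSet_singleton 0)).union (hmvec (measurableSet_singleton 0))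
  -- slices in `t` are null
  have hslice : ∀ t : ℝ, r t ≠ 0 → volume {u : Fin n → ℝ | (t, u) ∈ S} = 0 := by
    intro t ht
    apply measure_mono_null (t := {u : Fin n → ℝ | (r t) ⬝ᵥ u = 0}
      ∪ {u : Fin n → ℝ | ∃ c : ℝ, u = c • (r t)})
    · intro u hu
      obtain ⟨-, hu0, hcase⟩ := hu
      rcases hcase with h | h
      · left; rwa [dotProduct_comm] at h
      · right
        have hd : u ⬝ᵥ u ≠ 0 := ne_of_gt (dot_self_pos hu0)
        have hrt : r t = ((u ⬝ᵥ r t) / (u ⬝ᵥ u)) • u := by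
          have h' : (u ⬝ᵥ u) • r t = (u ⬝ᵥ r t) • u := by linear_combination (norm := module) h
          have := congrArg (fun x => (u ⬝ᵥ u)⁻¹ • x) h'
          simpa [smul_smul, inv_mul_cancel₀ hd, div_eq_inv_mul] using this
        have hcne : (u ⬝ᵥ r t) / (u ⬝ᵥ u) ≠ 0 := by
          intro hc
          rw [hc, zero_smul] at hrt
          exact ht hrt
        obtain ⟨d, hd_eq, hdne⟩ : ∃ d : ℝ, r t = d • u ∧ d ≠ 0 := ⟨_, hrt, hcne⟩
        refine ⟨d⁻¹, ?_⟩
        rw [hd_eq, smul_smul, inv_mul_cancel₀ hdne, one_smul]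
    · exact measure_union_null (null_hyperplane ht) (null_line hn (r t))
  -- product measure of S is zero
  have hprod : (μ01.prod volume) S = 0 := by
    rw [Measure.measure_prod_null hSmeas]
    have hae : ∀ᵐ t ∂μ01, r t ≠ 0 := by
      rw [ae_iff]
      simpa using h0
    filter_upwards [hae] with t ht
    exact hslice t ht
  -- swap
  have hswap : (volume.prod μ01) (Prod.swap ⁻¹' S) = 0 := by
    have := Measure.prod_swap (μ := volume (α := Fin n → ℝ)) (ν := μ01)
    calc (volume.prod μ01) (Prod.swap ⁻¹' S)
        = Measure.map Prod.swap (volume.prod μ01) S := by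
          rw [Measure.map_apply measurable_swap hSmeas]
      _ = (μ01.prod volume) S := by rw [this]
      _ = 0 := hprod
  have hae_u : ∀ᵐ u ∂(volume : Measure (Fin n → ℝ)),
      μ01 {t | (t, u) ∈ S} = 0 := by
    have := (Measure.measure_prod_null (hSmeas.preimage measurable_swap)).mp hswap
    filter_upwards [this] with u hu
    simpa [Set.preimage, Prod.swap] using hu
  have hae_ne : ∀ᵐ u ∂(volume : Measure (Fin n → ℝ)), u ≠ 0 := by
    rw [ae_iff]
    apply measure_mono_null (t := {u : Fin n → ℝ | ∃ c : ℝ, u = c • (0 : Fin n → ℝ)})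
    · intro u hu
      simp only [mem_setOf_eq, not_not] at hu
      exact ⟨0, by simp [hu]⟩
    · exact null_line hn 0
  obtain ⟨u, hu1, hu2⟩ := (hae_u.and hae_ne).exists
  refine ⟨u, hu2, ?_⟩
  apply measure_mono_null (t := {t | r t = 0} ∪ {t | (t, u) ∈ S})
  · intro t ht
    rcases eq_or_ne (r t) 0 with h | h
    · exact Or.inl h
    · refine Or.inr ⟨h, hu2, ?_⟩
      rcases ht with h' | ⟨c, hc⟩
      · exact Or.inl h'
      · right
        rw [hc]
        have : u ⬝ᵥ (c • u) = c * (u ⬝ᵥ u) := by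
          rw [dotProduct_smul]; ring_nf
        rw [this]
        module
  · exact measure_union_null h0 hu1

/-- There is an orthogonal matrix whose last row is a prescribed unit vector. -/
lemma exists_orthogonal_with_last_row {m : ℕ} (w1 : Fin (m + 1) → ℝ) (hw1 : w1 ⬝ᵥ w1 = 1) :
    ∃ U : Matrix (Fin (m + 1)) (Fin (m + 1)) ℝ,
      U ∈ Matrix.orthogonalGroup (Fin (m + 1)) ℝ ∧ (fun j => U (Fin.last m) j) = w1 := by
  classical
  let u' : EuclideanSpace ℝ (Fin (m + 1)) := WithLp.toLp 2 w1
  have hinner : ∀ x y : EuclideanSpace ℝ (Fin (m + 1)), inner ℝ x y = ∑ j, x j * y j := by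
    intro x y
    rw [PiLp.inner_apply]
    simp [RCLike.inner_apply, mul_comm]
  have hcard : Module.finrank ℝ (EuclideanSpace ℝ (Fin (m + 1)))
      = Fintype.card (Fin (m + 1)) := by
    simp [finrank_euclideanSpace]
  have horth : Orthonormal ℝ (Set.restrict {Fin.last m} (fun _ : Fin (m + 1) => u')) := by
    rw [orthonormal_iff_ite]
    rintro ⟨i, hi⟩ ⟨j, hj⟩
    have hij : i = j := by
      simp only [mem_singleton_iff] at hi hj
      rw [hi, hj]
    rw [if_pos (Subtype.ext hij)]
    show (inner ℝ u' u' : ℝ) = 1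
    rw [hinner]
    exact hw1
  obtain ⟨b, hb⟩ := horth.exists_orthonormalBasis_extension_of_card_eq hcard
  refine ⟨Matrix.of (fun k j => b k j), ?_, ?_⟩
  · rw [Matrix.mem_orthogonalGroup_iff]
    have hstar : star (Matrix.of (fun k j => b k j)) = (Matrix.of (fun k j => b k j))ᵀ := by
      ext i j; simp [Matrix.star_apply]
    ext k l
    rw [Matrix.mul_apply, Matrix.one_apply]
    have := (orthonormal_iff_ite.mp b.orthonormal) k l
    rw [hinner] at this
    simpa [Matrix.transpose_apply] using this
  · funext j
    simp only [Matrix.of_apply]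
    rw [hb (Fin.last m) rfl]

/-- Main induction: a measurable a.e.-nonvanishing function can be rotated so that
every component is a.e. nonvanishing. -/
lemma key : ∀ (m : ℕ) (r : ℝ → (Fin m → ℝ)), Measurable r →
    μ01 {t | r t = 0} = 0 →
    ∃ A ∈ Matrix.orthogonalGroup (Fin m) ℝ,
      ∀ k, μ01 {t | A.mulVec (r t) k = 0} = 0 := by
  intro m
  induction m with
  | zero =>
    intro r _ _
    exact ⟨1, one_mem _, fun k => k.elim0⟩
  | succ m ih =>
    intro r hr h0
    rcases Nat.eq_zero_or_pos m with hm | hm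
    · -- base case : dimension 1
      subst hm
      refine ⟨1, one_mem _, fun k => ?_⟩
      have hset : {t | (1 : Matrix (Fin 1) (Fin 1) ℝ).mulVec (r t) k = 0} = {t | r t = 0} := by
        ext t
        rw [mem_setOf_eq, mem_setOf_eq, Matrix.one_mulVec]
        constructor
        · intro h
          funext j
          have : j = k := Fin.ext (by omega)
          rw [this]; exact h
        · intro h; rw [h]; rfl
      rw [hset]; exact h0
    · -- inductive step, dimension m + 1 ≥ 2
      have hn : 2 ≤ m + 1 := by omega
      obtain ⟨u, hu0, hgood⟩ := exists_good hn r hr h0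
      have hspos : 0 < u ⬝ᵥ u := dot_self_pos hu0
      set c : ℝ := (Real.sqrt (u ⬝ᵥ u))⁻¹ with hc_def
      have hsqrt : Real.sqrt (u ⬝ᵥ u) ≠ 0 := by positivity
      have hcne : c ≠ 0 := inv_ne_zero hsqrt
      set w1 : Fin (m + 1) → ℝ := c • u with hw1_def
      have hw1w1 : w1 ⬝ᵥ w1 = 1 := by
        rw [hw1_def, smul_dotProduct, dotProduct_smul, smul_eq_mul, smul_eq_mul, ← mul_assoc,
          hc_def]
        rw [← mul_inv, Real.mul_self_sqrt hspos.le, inv_mul_cancel₀ hspos.ne']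
      obtain ⟨U, hU, hUlast⟩ := exists_orthogonal_with_last_row w1 hw1w1
      have hUtU : Uᵀ * U = 1 := by
        have := (Matrix.mem_orthogonalGroup_iff' (Fin (m + 1)) ℝ).mp hU
        have hstar : star U = Uᵀ := by ext i j; simp [Matrix.star_apply]
        exact this
      set v : ℝ → Fin (m + 1) → ℝ := fun t => U.mulVec (r t) with hv_def
      have hv_meas : Measurable v := by
        rw [hv_def, measurable_pi_iff]
        intro i
        simp only [Matrix.mulVec, dotProduct]
        exact Finset.measurable_sum _ fun j _ =>
          measurable_const.mul ((measurable_pi_apply j).comp hr)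
      set r' : ℝ → Fin m → ℝ := fun t i => v t i.castSucc with hr'_def
      have hr'_meas : Measurable r' := by
        rw [measurable_pi_iff]
        intro i
        exact (measurable_pi_apply _).comp hv_meas
      have hrecover : ∀ t, r t = Uᵀ.mulVec (v t) := by
        intro t
        rw [hv_def]
        rw [Matrix.mulVec_mulVec, hUtU, Matrix.one_mulVec]
      have hlast : ∀ t, v t (Fin.last m) = w1 ⬝ᵥ r t := by
        intro t
        rw [hv_def]
        show (fun j => U (Fin.last m) j) ⬝ᵥ r t = w1 ⬝ᵥ r t
        rw [hUlast]
      -- r' vanishes only on a null set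
      have hr'0 : μ01 {t | r' t = 0} = 0 := by
        apply measure_mono_null _ hgood
        intro t ht
        have hvz : ∀ i : Fin m, v t i.castSucc = 0 := fun i => congrFun ht i
        have hrt : r t = (v t (Fin.last m) * c) • u := by
          have h1 := hrecover t
          have h2 : ∀ j, r t j = v t (Fin.last m) * w1 j := by
            intro j
            rw [h1]
            show ∑ k, Uᵀ j k * v t k = _
            rw [Fin.sum_univ_castSucc]
            simp only [Matrix.transpose_apply]
            rw [Finset.sum_eq_zero (fun i _ => by rw [hvz i, mul_zero])]
            rw [zero_add]
            have : U (Fin.last m) j = w1 j := congrFun hUlast j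
            rw [this, mul_comm]
          funext j
          rw [h2 j, hw1_def]
          simp [mul_assoc]
        exact Or.inr ⟨_, hrt⟩
      obtain ⟨V, hV, hVk⟩ := ih r' hr'_meas hr'0
      -- assemble the block matrix
      set e : Fin m ⊕ Fin 1 ≃ Fin (m + 1) := finSumFinEquiv with he_def
      set W : Matrix (Fin (m + 1)) (Fin (m + 1)) ℝ :=
        (Matrix.fromBlocks V 0 0 (1 : Matrix (Fin 1) (Fin 1) ℝ)).submatrix e.symm e.symm
        with hW_def
      have hVVt : V * Vᵀ = 1 := by
        have := (Matrix.mem_orthogonalGroup_iff (Fin m) ℝ).mp hV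
        have hstar : star V = Vᵀ := by ext i j; simp [Matrix.star_apply]
        exact this
      have hW : W ∈ Matrix.orthogonalGroup (Fin (m + 1)) ℝ := by
        rw [Matrix.mem_orthogonalGroup_iff]
        have hstar : star W = Wᵀ := by ext i j; simp [Matrix.star_apply]
        rw [hW_def, Matrix.transpose_submatrix, Matrix.fromBlocks_transpose]
        rw [Matrix.submatrix_mul_equiv]
        rw [Matrix.fromBlocks_multiply]
        simp only [Matrix.mul_zero, Matrix.zero_mul, add_zero, zero_add, Matrix.mul_one,
          Matrix.one_mul, hVVt, Matrix.transpose_zero, Matrix.transpose_one]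
        rw [Matrix.fromBlocks_one]
        exact Matrix.submatrix_one_equiv e.symm
      refine ⟨W * U, mul_mem hW hU, ?_⟩
      have hWmul : ∀ y : Fin (m + 1) → ℝ,
          W.mulVec y = ((Matrix.fromBlocks V 0 0 (1 : Matrix (Fin 1) (Fin 1) ℝ)).mulVec
            (y ∘ e)) ∘ e.symm := by
        intro y
        rw [hW_def, Matrix.submatrix_mulVec_equiv]
        congr 1
      intro k
      have hAv : ∀ t, (W * U).mulVec (r t) = W.mulVec (v t) := by
        intro t
        rw [hv_def, Matrix.mulVec_mulVec]
      induction k using Fin.lastCases with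
      | last =>
        have hval : ∀ t, (W * U).mulVec (r t) (Fin.last m) = v t (Fin.last m) := by
          intro t
          rw [hAv t, hWmul]
          show (Matrix.fromBlocks V 0 0 1).mulVec (v t ∘ e) (e.symm (Fin.last m)) = _
          have hsymm : e.symm (Fin.last m) = Sum.inr 0 := finSumFinEquiv_symm_last
          rw [hsymm, Matrix.fromBlocks_mulVec]
          simp only [Sum.elim_inr, Matrix.zero_mulVec, zero_add, Matrix.one_mulVec,
            Function.comp_apply]
          show v t (e (Sum.inr 0)) = v t (Fin.last m)
          congr 1
        apply measure_mono_null _ hgood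
        intro t ht
        rw [mem_setOf_eq, hval t, hlast t] at ht
        left
        rw [hw1_def, smul_dotProduct, smul_eq_mul] at ht
        exact (mul_eq_zero.mp ht).resolve_left hcne
      | cast i =>
        have hval : ∀ t, (W * U).mulVec (r t) i.castSucc = V.mulVec (r' t) i := by
          intro t
          rw [hAv t, hWmul]
          show (Matrix.fromBlocks V 0 0 1).mulVec (v t ∘ e) (e.symm i.castSucc) = _
          have hsymm : e.symm i.castSucc = Sum.inl i := by
            rw [he_def]
            show finSumFinEquiv.symm (Fin.castAdd 1 i) = Sum.inl i
            exact finSumFinEquiv_symm_apply_castAdd i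
          rw [hsymm, Matrix.fromBlocks_mulVec]
          simp only [Sum.elim_inl, Matrix.zero_mulVec, add_zero]
          congr 1
        have hset : {t | (W * U).mulVec (r t) i.castSucc = 0}
            = {t | V.mulVec (r' t) i = 0} := by
          ext t; rw [mem_setOf_eq, mem_setOf_eq, hval t]
        rw [hset]
        exact hVk i

end RotAux

/-- if `q ∈ L²(I,ℝᴺ)` (written componentwise) and `q⁻¹(0)` has
measure zero, then there is an orthogonal matrix `A ∈ O(N,ℝ)` such that each
component of `q̃ = A q` vanishes only on a set of measure zero. -/
theorem rotate_to_nonvanishing_components (N : ℕ) (hN : 1 ≤ N)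
    (q : ℝ → (Fin N → ℝ)) (hq : MemLp q 2 μ01)
    (h0 : volume {t ∈ Set.Icc (0:ℝ) 1 | q t = 0} = 0) :
    ∃ A : Matrix.orthogonalGroup (Fin N) ℝ,
      ∀ k : Fin N,
        volume {t ∈ Set.Icc (0:ℝ) 1 |
          (A : Matrix (Fin N) (Fin N) ℝ).mulVec (q t) k = 0} = 0 := by
  have hIcc : MeasurableSet (Set.Icc (0:ℝ) 1) := measurableSet_Icc
  have hvol : ∀ P : ℝ → Prop, volume {t ∈ Set.Icc (0:ℝ) 1 | P t} = μ01 {t | P t} := by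
    intro P
    rw [μ01, Measure.restrict_apply' hIcc]
    congr 1
    ext t
    simp only [mem_setOf_eq, mem_inter_iff]
    tauto
  set r : ℝ → Fin N → ℝ := hq.aestronglyMeasurable.mk q with hr_def
  have hrm : Measurable r := hq.aestronglyMeasurable.stronglyMeasurable_mk.measurable
  have hae : q =ᵐ[μ01] r := hq.aestronglyMeasurable.ae_eq_mk
  have hne : μ01 {t | q t ≠ r t} = 0 := by
    rw [← ae_iff] at *
    exact hae.mono fun t h => by simp [h]
  have h0' : μ01 {t | r t = 0} = 0 := by
    apply measure_mono_null (t := {t | q t = 0} ∪ {t | q t ≠ r t})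
    · intro t ht
      rcases eq_or_ne (q t) (r t) with h | h
      · exact Or.inl (h.trans ht)
      · exact Or.inr h
    · refine measure_union_null ?_ hne
      rw [← hvol fun t => q t = 0]
      exact h0
  obtain ⟨A, hA, hk⟩ := RotAux.key N r hrm h0'
  refine ⟨⟨A, hA⟩, fun k => ?_⟩
  rw [hvol]
  apply measure_mono_null (t := {t | A.mulVec (r t) k = 0} ∪ {t | q t ≠ r t})
  · intro t ht
    rcases eq_or_ne (q t) (r t) with h | h
    · left
      simp only [mem_setOf_eq] at ht ⊢
      rw [← h]
      exact ht
    · exact Or.inr h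
  · exact measure_union_null (hk k) hne

end
end

section
/- Let q ∈ L²(I,ℝ) satisfy μ(q⁻¹(0)) = 0, where μ is Lebesgue measure. Let (τ_k) be a sequence in Γ̃ and τ ∈ Γ̃. If q*τ_k → q*τ in the L² norm as k → ∞, then for every t ∈ I, τ_k(t) → τ(t). -/
open MeasureTheory Set Filter

noncomputable section

variable {E : Type*} [NormedAddCommGroup E] [InnerProductSpace ℝ E]

namespace RepAux

def ind (γ : GammaTilde) : ℝ → ℝ := (Set.Icc (0:ℝ) 1).indicator γ.deriv'

lemma ind_integrable (γ : GammaTilde) : Integrable (ind γ) volume :=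
  (integrable_indicator_iff measurableSet_Icc).2 γ.integrableOn

lemma ind_nonneg_ae (γ : GammaTilde) : 0 ≤ᵐ[volume] ind γ := by
  have h := γ.nonneg
  rw [μ01, ae_restrict_iff' measurableSet_Icc] at h
  filter_upwards [h] with t ht
  by_cases h' : t ∈ Set.Icc (0:ℝ) 1
  · simp [ind, indicator_of_mem h', ht h']
  · simp [ind, indicator_of_notMem h']

def gfun (γ : GammaTilde) : ℝ → ℝ := fun x => ∫ u in (0:ℝ)..x, ind γ u

lemma gfun_continuous (γ : GammaTilde) : Continuous (gfun γ) :=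
  intervalIntegral.continuous_primitive
    (fun _ _ => (ind_integrable γ).intervalIntegrable) 0

lemma gfun_monotone (γ : GammaTilde) : Monotone (gfun γ) := by
  intro x y hxy
  have := intervalIntegral.integral_add_adjacent_intervals
    (a := (0:ℝ)) (b := x) (c := y)
    ((ind_integrable γ).intervalIntegrable) ((ind_integrable γ).intervalIntegrable)
  have hnn : (0:ℝ → ℝ) ≤ᵐ[volume] ind γ := ind_nonneg_ae γ
  have h2 : 0 ≤ ∫ u in x..y, ind γ u :=
    intervalIntegral.integral_nonneg_of_ae hxy hnn
  simp only [gfun]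
  linarith [this]

lemma gfun_eq (γ : GammaTilde) {t : ℝ} (ht : t ∈ Set.Icc (0:ℝ) 1) :
    gfun γ t = γ.toFun t := by
  rw [γ.eq_integral t ht, gfun]
  refine intervalIntegral.integral_congr (fun u hu => ?_)
  rw [uIcc_of_le ht.1] at hu
  exact indicator_of_mem (Icc_subset_Icc le_rfl ht.2 hu) _

lemma gfun_zero (γ : GammaTilde) : gfun γ 0 = 0 := by
  rw [gfun_eq γ (by simp : (0:ℝ) ∈ Set.Icc (0:ℝ) 1), γ.map_zero]

lemma gfun_mem (γ : GammaTilde) {t : ℝ} (ht : t ∈ Set.Icc (0:ℝ) 1) :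
    gfun γ t ∈ Set.Icc (0:ℝ) 1 := by
  constructor
  · rw [← gfun_zero γ]; exact gfun_monotone γ ht.1
  · rw [← γ.map_one, ← gfun_eq γ (by simp : (1:ℝ) ∈ Set.Icc (0:ℝ) 1)]
    exact gfun_monotone γ ht.2

lemma lint_deriv (γ : GammaTilde) {c : ℝ} (hc : c ∈ Set.Icc (0:ℝ) 1) :
    ∫⁻ s in Set.Ioc 0 c, ENNReal.ofReal (γ.deriv' s) = ENNReal.ofReal (gfun γ c) := by
  have hsub : Set.Ioc (0:ℝ) c ⊆ Set.Icc (0:ℝ) 1 :=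
    fun s hs => Set.mem_Icc.2 ⟨hs.1.le, hs.2.trans hc.2⟩
  have hint : IntegrableOn γ.deriv' (Set.Ioc 0 c) volume := γ.integrableOn.mono_set hsub
  have hnn : 0 ≤ᵐ[volume.restrict (Set.Ioc 0 c)] γ.deriv' :=
    ae_mono (Measure.restrict_mono hsub le_rfl) γ.nonneg
  rw [← ofReal_integral_eq_lintegral_ofReal hint hnn]
  congr 1
  have : gfun γ c = ∫ u in (0:ℝ)..c, γ.deriv' u := by
    rw [gfun_eq γ hc]; exact γ.eq_integral c hc
  rw [this, intervalIntegral.integral_of_le hc.1]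

def nu (γ : GammaTilde) (t : ℝ) : Measure ℝ :=
  (volume.restrict (Set.Ioc 0 t)).withDensity (fun s => ENNReal.ofReal (γ.deriv' s))

lemma nu_apply (γ : GammaTilde) (t : ℝ) {A : Set ℝ} (hA : MeasurableSet A) :
    nu γ t A = ∫⁻ s in A ∩ Set.Ioc 0 t, ENNReal.ofReal (γ.deriv' s) := by
  rw [nu, withDensity_apply _ hA, Measure.restrict_restrict hA]

lemma key_map (γ : GammaTilde) {t : ℝ} (ht : t ∈ Set.Icc (0:ℝ) 1) :
    Measure.map (gfun γ) (nu γ t) = volume.restrict (Set.Ioc 0 (gfun γ t)) := by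
  have hmeas : Measurable (gfun γ) := (gfun_continuous γ).measurable
  have hfin : IsFiniteMeasure (Measure.map (gfun γ) (nu γ t)) := by
    constructor
    rw [Measure.map_apply hmeas MeasurableSet.univ]
    simp only [Set.preimage_univ]
    rw [nu_apply γ t MeasurableSet.univ, Set.univ_inter, lint_deriv γ ht]
    exact ENNReal.ofReal_lt_top
  refine Measure.ext_of_Iic _ _ (fun b => ?_)
  rw [Measure.map_apply hmeas measurableSet_Iic,
    nu_apply γ t (hmeas measurableSet_Iic)]
  have hgt0 : 0 ≤ gfun γ t := (gfun_mem γ ht).1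
  rcases lt_or_ge b 0 with hb | hb
  · -- b < 0 : both sides 0
    have h1 : gfun γ ⁻¹' Set.Iic b ∩ Set.Ioc 0 t = ∅ := by
      refine Set.eq_empty_iff_forall_notMem.2 (fun s hs => ?_)
      obtain ⟨hgs, hs0, hst⟩ := hs
      have h2 : (0:ℝ) ≤ gfun γ s := by rw [← gfun_zero γ]; exact gfun_monotone γ hs0.le
      have : (0:ℝ) ≤ b := h2.trans hgs
      linarith
    have h2 : Set.Iic b ∩ Set.Ioc 0 (gfun γ t) = ∅ := by
      refine Set.eq_empty_iff_forall_notMem.2 (fun u hu => ?_)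
      have hub : u ≤ b := hu.1
      have hu0 : (0:ℝ) < u := hu.2.1
      linarith
    rw [h1, Measure.restrict_apply measurableSet_Iic, h2]
    simp
  · rcases le_or_gt (gfun γ t) b with hbt | hbt
    · -- b ≥ gfun t : preimage covers everything
      have h1 : gfun γ ⁻¹' Set.Iic b ∩ Set.Ioc 0 t = Set.Ioc 0 t := by
        refine Set.inter_eq_right.2 (fun s hs => ?_)
        exact le_trans (gfun_monotone γ hs.2) hbt
      rw [h1, lint_deriv γ ht]
      rw [Measure.restrict_apply measurableSet_Iic]
      have : Set.Iic b ∩ Set.Ioc 0 (gfun γ t) = Set.Ioc 0 (gfun γ t) := by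
        refine Set.inter_eq_right.2 (fun u hu => le_trans hu.2 hbt)
      rw [this, Real.volume_Ioc, sub_zero]
    · -- 0 ≤ b < gfun t
      set S := {s ∈ Set.Icc 0 t | gfun γ s ≤ b} with hS
      have h0S : (0:ℝ) ∈ S := ⟨⟨le_rfl, ht.1⟩, by rw [gfun_zero γ]; exact hb⟩
      have hne : S.Nonempty := ⟨0, h0S⟩
      have hbdd : BddAbove S := ⟨t, fun s hs => hs.1.2⟩
      have hclosed : IsClosed S := by
        have : S = Set.Icc 0 t ∩ gfun γ ⁻¹' Set.Iic b := by
          ext s; simp [hS, Set.mem_sep_iff]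
        rw [this]
        exact isClosed_Icc.inter (isClosed_Iic.preimage (gfun_continuous γ))
      set c := sSup S with hc
      have hcS : c ∈ S := hclosed.csSup_mem hne hbdd
      have hc0 : 0 ≤ c := le_csSup hbdd h0S
      have hct : c ≤ t := csSup_le hne (fun s hs => hs.1.2)
      have hgc_le : gfun γ c ≤ b := hcS.2
      have hclt : c < t := by
        rcases eq_or_lt_of_le hct with h | h
        · exfalso; rw [h] at hgc_le; linarith
        · exact h
      have hgt_gt : ∀ s, c < s → s ≤ t → b < gfun γ s := by
        intro s hcs hst
        by_contra h
        push_neg at h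
        have : s ∈ S := ⟨⟨hc0.trans hcs.le, hst⟩, h⟩
        exact absurd (le_csSup hbdd this) (not_le.2 hcs)
      have hgc_ge : b ≤ gfun γ c := by
        have : Tendsto (gfun γ) (nhdsWithin c (Set.Ioc c t)) (nhds (gfun γ c)) :=
          ((gfun_continuous γ).tendsto c).mono_left nhdsWithin_le_nhds
        have hne' : (nhdsWithin c (Set.Ioc c t)).NeBot := by
          rw [nhdsWithin_Ioc_eq_nhdsGT hclt]
          exact nhdsGT_neBot c
        refine ge_of_tendsto this ?_
        filter_upwards [self_mem_nhdsWithin] with s hs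
        exact (hgt_gt s hs.1 hs.2).le
      have hgc : gfun γ c = b := le_antisymm hgc_le hgc_ge
      have h1 : gfun γ ⁻¹' Set.Iic b ∩ Set.Ioc 0 t = Set.Ioc 0 c := by
        ext s
        simp only [Set.mem_inter_iff, Set.mem_preimage, Set.mem_Iic, Set.mem_Ioc]
        constructor
        · rintro ⟨hgs, hs0, hst⟩
          refine ⟨hs0, ?_⟩
          by_contra h
          push_neg at h
          exact absurd hgs (not_le.2 (hgt_gt s h hst))
        · rintro ⟨hs0, hsc⟩
          exact ⟨by rw [← hgc]; exact gfun_monotone γ hsc, hs0, hsc.trans hct⟩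
      rw [h1]
      have : ∫⁻ s in Set.Ioc 0 c, ENNReal.ofReal (γ.deriv' s) = ENNReal.ofReal (gfun γ c) :=
        lint_deriv γ ⟨hc0, hct.trans ht.2⟩
      rw [this, hgc]
      rw [Measure.restrict_apply measurableSet_Iic]
      have : Set.Iic b ∩ Set.Ioc 0 (gfun γ t) = Set.Ioc 0 b := by
        ext u; simp only [Set.mem_inter_iff, Set.mem_Iic, Set.mem_Ioc]
        exact ⟨fun ⟨h1, h2, h3⟩ => ⟨h2, h1⟩, fun ⟨h1, h2⟩ => ⟨h2, h1, h2.trans hbt.le⟩⟩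
      rw [this, Real.volume_Ioc, sub_zero]


def act (q : ℝ → ℝ) (γ : GammaTilde) : ℝ → ℝ :=
  fun t => Real.sqrt (γ.deriv' t) * q (γ.toFun t)

lemma mu01_eq : μ01 = volume.restrict (Set.Ioc (0:ℝ) 1) :=
  (Measure.restrict_congr_set Ioc_ae_eq_Icc).symm

lemma restrict_le_mu01 {x : ℝ} (hx : x ∈ Set.Icc (0:ℝ) 1) :
    volume.restrict (Set.Ioc 0 x) ≤ μ01 :=
  Measure.restrict_mono (fun s hs => Set.mem_Icc.2 ⟨hs.1.le, hs.2.trans hx.2⟩) le_rfl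

lemma act_lintegral (γ : GammaTilde) {q : ℝ → ℝ} (hq : MemLp q 2 μ01)
    {t : ℝ} (ht : t ∈ Set.Icc (0:ℝ) 1) :
    ∫⁻ s in Set.Ioc 0 t, ENNReal.ofReal ((act q γ s)^2)
      = ∫⁻ u in Set.Ioc (0:ℝ) (γ.toFun t), ENNReal.ofReal ((q u)^2) := by
  have hsub : Set.Ioc (0:ℝ) t ⊆ Set.Icc (0:ℝ) 1 :=
    fun s hs => Set.mem_Icc.2 ⟨hs.1.le, hs.2.trans ht.2⟩
  set μt := volume.restrict (Set.Ioc (0:ℝ) t) with hμt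
  set w : ℝ → ENNReal := fun s => ENNReal.ofReal (γ.deriv' s) with hw
  have hwm : AEMeasurable w μt :=
    ENNReal.measurable_ofReal.comp_aemeasurable
      ((γ.integrableOn.aemeasurable).mono_measure (restrict_le_mu01 ht))
  have hnn : ∀ᵐ s ∂μt, 0 ≤ γ.deriv' s := ae_mono (restrict_le_mu01 ht) γ.nonneg
  have h1 : ∫⁻ s in Set.Ioc 0 t, ENNReal.ofReal ((act q γ s)^2)
      = ∫⁻ s, (w * fun s => ENNReal.ofReal ((q (gfun γ s))^2)) s ∂μt := by
    refine lintegral_congr_ae ?_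
    filter_upwards [ae_restrict_mem measurableSet_Ioc, hnn] with s hs hnns
    have hgs : γ.toFun s = gfun γ s := (gfun_eq γ (hsub hs)).symm
    simp only [act, hgs, Pi.mul_apply, hw]
    rw [mul_pow, Real.sq_sqrt hnns, ← ENNReal.ofReal_mul hnns]
  have h2 : ∫⁻ s, (w * fun s => ENNReal.ofReal ((q (gfun γ s))^2)) s ∂μt
      = ∫⁻ s, ENNReal.ofReal ((q (gfun γ s))^2) ∂(nu γ t) := by
    rw [nu, lintegral_withDensity_eq_lintegral_mul_non_measurable₀ _ hwm
      (Eventually.of_forall (fun s => ENNReal.ofReal_lt_top))]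
  have hmap := key_map γ ht
  have hqa : AEMeasurable q (volume.restrict (Set.Ioc 0 (gfun γ t))) :=
    (hq.aestronglyMeasurable.aemeasurable).mono_measure (restrict_le_mu01 (gfun_mem γ ht))
  have hqa2 : AEMeasurable (fun u => ENNReal.ofReal ((q u)^2))
      (Measure.map (gfun γ) (nu γ t)) := by
    rw [hmap]
    exact ENNReal.measurable_ofReal.comp_aemeasurable (hqa.pow aemeasurable_const)
  have h3 : ∫⁻ s, ENNReal.ofReal ((q (gfun γ s))^2) ∂(nu γ t)
      = ∫⁻ u, ENNReal.ofReal ((q u)^2) ∂(Measure.map (gfun γ) (nu γ t)) :=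
    (lintegral_map' hqa2 ((gfun_continuous γ).measurable.aemeasurable)).symm
  rw [h1, h2, h3, hmap, gfun_eq γ ht]

lemma act_aestronglyMeasurable (γ : GammaTilde) {q : ℝ → ℝ} (hq : MemLp q 2 μ01) :
    AEStronglyMeasurable (act q γ) μ01 := by
  have h1 : (1:ℝ) ∈ Set.Icc (0:ℝ) 1 := by norm_num
  have hqa := hq.aestronglyMeasurable.aemeasurable
  set qt := hqa.mk q with hqt
  have hqm : Measurable qt := hqa.measurable_mk
  have hN : μ01 {x | q x ≠ qt x} = 0 := hqa.ae_eq_mk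
  set N := toMeasurable μ01 {x | q x ≠ qt x} with hNdef
  have hNm : MeasurableSet N := measurableSet_toMeasurable _ _
  have hN0 : μ01 N = 0 := by rw [hNdef, measure_toMeasurable]; exact hN
  have hsubN : {x | q x ≠ qt x} ⊆ N := subset_toMeasurable _ _
  set D := gfun γ ⁻¹' N with hDdef
  have hDm : MeasurableSet D := (gfun_continuous γ).measurable hNm
  have hg1 : gfun γ 1 = 1 := by rw [gfun_eq γ h1, γ.map_one]
  have hmapN : (nu γ 1) D = volume.restrict (Set.Ioc 0 (gfun γ 1)) N := by
    rw [← key_map γ h1, Measure.map_apply (gfun_continuous γ).measurable hNm]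
  have hD0 : nu γ 1 D = 0 := by
    rw [hmapN, hg1]
    refine le_antisymm (le_trans ?_ hN0.le) (zero_le)
    exact Measure.le_iff'.1 (restrict_le_mu01 h1) N
  have hD0' : ∫⁻ s in D, ENNReal.ofReal (γ.deriv' s) ∂(volume.restrict (Set.Ioc (0:ℝ) 1)) = 0 := by
    rw [nu, withDensity_apply _ hDm] at hD0
    exact hD0
  have hwm : AEMeasurable (fun s => ENNReal.ofReal (γ.deriv' s))
      ((volume.restrict (Set.Ioc (0:ℝ) 1)).restrict D) :=
    (ENNReal.measurable_ofReal.comp_aemeasurable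
      ((γ.integrableOn.aemeasurable).mono_measure (restrict_le_mu01 h1))).mono_measure
      Measure.restrict_le_self
  have hzero : ∀ᵐ s ∂(volume.restrict (Set.Ioc (0:ℝ) 1)), s ∈ D → γ.deriv' s ≤ 0 := by
    have := (lintegral_eq_zero_iff' hwm).1 hD0'
    rw [EventuallyEq, ae_restrict_iff' hDm] at this
    filter_upwards [this] with s hs hsD
    have := hs hsD
    simpa [ENNReal.ofReal_eq_zero] using this
  rw [mu01_eq]
  have hae : act q γ =ᵐ[volume.restrict (Set.Ioc (0:ℝ) 1)]
      fun s => Real.sqrt (γ.deriv' s) * qt (gfun γ s) := by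
    have hnn : ∀ᵐ s ∂(volume.restrict (Set.Ioc (0:ℝ) 1)), 0 ≤ γ.deriv' s := by
      rw [← mu01_eq]; exact γ.nonneg
    filter_upwards [hzero, hnn, ae_restrict_mem measurableSet_Ioc] with s hsD hnns hs
    have hgs : γ.toFun s = gfun γ s := (gfun_eq γ (Set.Ioc_subset_Icc_self hs)).symm
    simp only [act, hgs]
    by_cases hD : s ∈ D
    · have h0 : γ.deriv' s = 0 := le_antisymm (hsD hD) hnns
      simp [h0]
    · have : gfun γ s ∉ N := hD
      have : q (gfun γ s) = qt (gfun γ s) := by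
        by_contra hne
        exact this (hsubN hne)
      rw [this]
  refine AEStronglyMeasurable.congr ?_ hae.symm
  refine AEStronglyMeasurable.mul ?_ ?_
  · exact (Real.continuous_sqrt.comp_aestronglyMeasurable
      ((γ.integrableOn.aestronglyMeasurable).mono_measure (restrict_le_mu01 h1)))
  · exact (hqm.comp (gfun_continuous γ).measurable).aestronglyMeasurable

lemma act_memLp (γ : GammaTilde) {q : ℝ → ℝ} (hq : MemLp q 2 μ01) :
    MemLp (act q γ) 2 μ01 := by
  have h1 : (1:ℝ) ∈ Set.Icc (0:ℝ) 1 := by norm_num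
  have hq2 : Integrable (fun u => (q u)^2) μ01 :=
    (memLp_two_iff_integrable_sq hq.aestronglyMeasurable).1 hq
  have hfin : ∫⁻ u, ENNReal.ofReal ((q u)^2) ∂μ01 < ⊤ := by
    have := hq2.hasFiniteIntegral
    rw [hasFiniteIntegral_iff_norm] at this
    refine lt_of_le_of_lt (lintegral_mono (fun u => ?_)) this
    exact ENNReal.ofReal_le_ofReal (le_abs_self _)
  have hmeas := act_aestronglyMeasurable γ hq
  rw [memLp_two_iff_integrable_sq hmeas]
  constructor
  · exact (hmeas.mul hmeas).congr (Eventually.of_forall fun u => (pow_two _).symm)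
  · have hnn : 0 ≤ᵐ[μ01] fun u => (act q γ u)^2 := Eventually.of_forall fun u => sq_nonneg _
    rw [hasFiniteIntegral_iff_ofReal hnn]
    calc ∫⁻ u, ENNReal.ofReal ((act q γ u)^2) ∂μ01
        = ∫⁻ s in Set.Ioc (0:ℝ) 1, ENNReal.ofReal ((act q γ s)^2) := by rw [mu01_eq]
      _ = ∫⁻ u in Set.Ioc (0:ℝ) (γ.toFun 1), ENNReal.ofReal ((q u)^2) := act_lintegral γ hq h1
      _ ≤ ∫⁻ u, ENNReal.ofReal ((q u)^2) ∂μ01 := by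
          rw [γ.map_one]; exact lintegral_mono' (restrict_le_mu01 h1) le_rfl
      _ < ⊤ := hfin


def Ffun (q : ℝ → ℝ) : ℝ → ℝ := fun x => ∫ u in Set.Ioc (0:ℝ) x, (q u)^2

lemma restrict_Ioc_le_mu01 {x y : ℝ} (hx : 0 ≤ x) (hy : y ≤ 1) :
    volume.restrict (Set.Ioc x y) ≤ μ01 :=
  Measure.restrict_mono (fun s hs => Set.mem_Icc.2 ⟨hx.trans hs.1.le, hs.2.trans hy⟩) le_rfl

lemma Ffun_lt {q : ℝ → ℝ} (hq : MemLp q 2 μ01)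
    (h0 : volume {t ∈ Set.Icc (0:ℝ) 1 | q t = 0} = 0)
    {x y : ℝ} (hx : x ∈ Set.Icc (0:ℝ) 1) (hy : y ∈ Set.Icc (0:ℝ) 1) (hxy : x < y) :
    Ffun q x < Ffun q y := by
  have hq2 : Integrable (fun u => (q u)^2) μ01 :=
    (memLp_two_iff_integrable_sq hq.aestronglyMeasurable).1 hq
  have hIx : IntegrableOn (fun u => (q u)^2) (Set.Ioc 0 x) volume :=
    hq2.mono_measure (restrict_le_mu01 hx)
  have hIxy : IntegrableOn (fun u => (q u)^2) (Set.Ioc x y) volume :=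
    hq2.mono_measure (restrict_Ioc_le_mu01 hx.1 hy.2)
  have hsplit : Ffun q y = Ffun q x + ∫ u in Set.Ioc x y, (q u)^2 := by
    rw [Ffun, Ffun, ← setIntegral_union (Set.Ioc_disjoint_Ioc_of_le le_rfl) measurableSet_Ioc hIx hIxy,
      Set.Ioc_union_Ioc_eq_Ioc hx.1 hxy.le]
  have hpos : 0 < ∫ u in Set.Ioc x y, (q u)^2 := by
    rw [setIntegral_pos_iff_support_of_nonneg_ae
      (Eventually.of_forall fun u => sq_nonneg _) hIxy]
    have hcover : Set.Ioc x y ⊆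
        (Function.support (fun u => (q u)^2) ∩ Set.Ioc x y) ∪
          {t ∈ Set.Icc (0:ℝ) 1 | q t = 0} := by
      intro u hu
      by_cases hqu : q u = 0
      · exact Or.inr ⟨Set.mem_Icc.2 ⟨hx.1.trans hu.1.le, hu.2.trans hy.2⟩, hqu⟩
      · exact Or.inl ⟨pow_ne_zero 2 hqu, hu⟩
    have hle : volume (Set.Ioc x y)
        ≤ volume (Function.support (fun u => (q u)^2) ∩ Set.Ioc x y) := by
      calc volume (Set.Ioc x y)
          ≤ volume ((Function.support (fun u => (q u)^2) ∩ Set.Ioc x y) ∪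
              {t ∈ Set.Icc (0:ℝ) 1 | q t = 0}) := measure_mono hcover
        _ ≤ volume (Function.support (fun u => (q u)^2) ∩ Set.Ioc x y) +
              volume {t ∈ Set.Icc (0:ℝ) 1 | q t = 0} := measure_union_le _ _
        _ = volume (Function.support (fun u => (q u)^2) ∩ Set.Ioc x y) := by rw [h0, add_zero]
    refine lt_of_lt_of_le ?_ hle
    rw [Real.volume_Ioc]
    exact ENNReal.ofReal_pos.2 (by linarith)
  linarith [hsplit, hpos]

lemma Ffun_le {q : ℝ → ℝ} (hq : MemLp q 2 μ01)
    (h0 : volume {t ∈ Set.Icc (0:ℝ) 1 | q t = 0} = 0)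
    {x y : ℝ} (hx : x ∈ Set.Icc (0:ℝ) 1) (hy : y ∈ Set.Icc (0:ℝ) 1) (hxy : x ≤ y) :
    Ffun q x ≤ Ffun q y := by
  rcases eq_or_lt_of_le hxy with h | h
  · rw [h]
  · exact (Ffun_lt hq h0 hx hy h).le

lemma toFun_mem (γ : GammaTilde) {t : ℝ} (ht : t ∈ Set.Icc (0:ℝ) 1) :
    γ.toFun t ∈ Set.Icc (0:ℝ) 1 := by
  rw [← gfun_eq γ ht]; exact gfun_mem γ ht

lemma act_sq_aesm (γ : GammaTilde) {q : ℝ → ℝ} (hq : MemLp q 2 μ01) :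
    AEStronglyMeasurable (fun s => (act q γ s)^2) μ01 := by
  have h := act_aestronglyMeasurable γ hq
  exact (h.mul h).congr (Eventually.of_forall fun u => (pow_two _).symm)

lemma act_setIntegral (γ : GammaTilde) {q : ℝ → ℝ} (hq : MemLp q 2 μ01)
    {t : ℝ} (ht : t ∈ Set.Icc (0:ℝ) 1) :
    ∫ s in Set.Ioc (0:ℝ) t, (act q γ s)^2 = Ffun q (γ.toFun t) := by
  have hq2aesm : AEStronglyMeasurable (fun u => (q u)^2) μ01 := by
    have h := hq.aestronglyMeasurable
    exact (h.mul h).congr (Eventually.of_forall fun u => (pow_two _).symm)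
  rw [Ffun,
    integral_eq_lintegral_of_nonneg_ae (Eventually.of_forall fun u => sq_nonneg _)
      ((act_sq_aesm γ hq).mono_measure (restrict_le_mu01 ht)),
    integral_eq_lintegral_of_nonneg_ae (Eventually.of_forall fun u => sq_nonneg _)
      (hq2aesm.mono_measure (restrict_le_mu01 (toFun_mem γ ht)))]
  rw [act_lintegral γ hq ht]

end RepAux

/-- if `q ∈ L²(I,ℝ)` vanishes only on a null set, `(τ_k) ⊆ Γ̃`,
`τ ∈ Γ̃`, and `q*τ_k → q*τ` in `L²`, then `τ_k(t) → τ(t)` for every `t ∈ I`. -/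
theorem pointwise_convergence_of_reparametrizations (q : ℝ → ℝ)
    (hq : MemLp q 2 μ01)
    (h0 : volume {t ∈ Set.Icc (0:ℝ) 1 | q t = 0} = 0)
    (τk : ℕ → GammaTilde) (τ : GammaTilde)
    (hconv : Tendsto (fun k => L2dist (act q (τk k)) (act q τ)) atTop (nhds 0)) :
    ∀ t ∈ Set.Icc (0:ℝ) 1,
      Tendsto (fun k => (τk k).toFun t) atTop (nhds (τ.toFun t)) := by
  intro t ht
  have hacteq : ∀ γ : GammaTilde, act q γ = RepAux.act q γ := by
    intro γ; funext s; simp [act, RepAux.act, smul_eq_mul]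
  set F : ℝ → ℝ := RepAux.Ffun q with hFdef
  set f : ℝ → ℝ := RepAux.act q τ with hfdef
  set fk : ℕ → ℝ → ℝ := fun k => RepAux.act q (τk k) with hfkdef
  have hmem : MemLp f 2 μ01 := RepAux.act_memLp τ hq
  have hmemk : ∀ k, MemLp (fk k) 2 μ01 := fun k => RepAux.act_memLp (τk k) hq
  set D : ℕ → ℝ := fun k => L2dist (fk k) f with hDdef
  have hDconv : Tendsto D atTop (nhds 0) := by
    have : (fun k => L2dist (act q (τk k)) (act q τ)) = D := by
      funext k; rw [hDdef]; simp only [hacteq, hfdef, hfkdef]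
    rwa [this] at hconv
  have hDnn : ∀ k, 0 ≤ D k := fun k => Real.sqrt_nonneg _
  have hA : ∀ k, ∫ u, (fk k u - f u)^2 ∂μ01 = (D k)^2 := by
    intro k
    have hnn : 0 ≤ ∫ u, (fk k u - f u)^2 ∂μ01 := integral_nonneg (fun u => sq_nonneg _)
    have heq : ∫ s in Set.Icc (0:ℝ) 1, ‖fk k s - f s‖^2 = ∫ u, (fk k u - f u)^2 ∂μ01 := by
      rw [show μ01 = volume.restrict (Set.Icc (0:ℝ) 1) from rfl]
      refine integral_congr_ae (Eventually.of_forall fun u => ?_)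
      simp only [Real.norm_eq_abs, sq_abs]
    rw [hDdef]
    simp only [L2dist]
    rw [heq, Real.sq_sqrt hnn]
  have hfsq : Integrable (fun u => (f u)^2) μ01 :=
    (memLp_two_iff_integrable_sq hmem.aestronglyMeasurable).1 hmem
  have hfksq : ∀ k, Integrable (fun u => (fk k u)^2) μ01 := fun k =>
    (memLp_two_iff_integrable_sq (hmemk k).aestronglyMeasurable).1 (hmemk k)
  have hdiffmem : ∀ k, MemLp (fun u => fk k u - f u) 2 μ01 := fun k => (hmemk k).sub hmem
  have hdiffsq : ∀ k, Integrable (fun u => (fk k u - f u)^2) μ01 := fun k =>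
    (memLp_two_iff_integrable_sq (hdiffmem k).aestronglyMeasurable).1 (hdiffmem k)
  have hprodaesm : ∀ k, AEStronglyMeasurable (fun u => |f u| * |fk k u - f u|) μ01 := by
    intro k
    have := hmem.aestronglyMeasurable.norm.mul (hdiffmem k).aestronglyMeasurable.norm
    exact this.congr (Eventually.of_forall fun u => by simp [Real.norm_eq_abs])
  have hprod : ∀ k, Integrable (fun u => |f u| * |fk k u - f u|) μ01 := by
    intro k
    refine Integrable.mono' (hfsq.add (hdiffsq k)) (hprodaesm k)
      (Eventually.of_forall fun u => ?_)
    have h1 : ‖|f u| * |fk k u - f u|‖ = |f u| * |fk k u - f u| := by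
      rw [Real.norm_eq_abs, abs_of_nonneg (mul_nonneg (abs_nonneg _) (abs_nonneg _))]
    rw [h1]
    simp only [Pi.add_apply]
    nlinarith [sq_abs (f u), sq_abs (fk k u - f u), sq_nonneg (|f u| - |fk k u - f u|),
      mul_nonneg (abs_nonneg (f u)) (abs_nonneg (fk k u - f u))]
  set C : ℝ := (∫ u, (f u)^2 ∂μ01) ^ ((1:ℝ)/2) with hCdef
  have hrpow2 : ∀ a : ℝ, |a| ^ (2:ℝ) = a^2 := fun a => by
    rw [show (2:ℝ) = ((2:ℕ):ℝ) by norm_num, Real.rpow_natCast, sq_abs]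
  have hCS : ∀ k, ∫ u, |f u| * |fk k u - f u| ∂μ01 ≤ C * D k := by
    intro k
    have hpq : Real.HolderConjugate 2 2 := Real.HolderConjugate.two_two
    have h2 : ENNReal.ofReal (2:ℝ) = 2 := by
      rw [show (2:ℝ) = ((2:ℕ):ℝ) by norm_num, ENNReal.ofReal_natCast]; norm_num
    have hf2 : MemLp (fun u => |f u|) (ENNReal.ofReal 2) μ01 := by
      rw [h2]
      exact hmem.norm.ae_eq (Eventually.of_forall fun u => by simp [Real.norm_eq_abs])
    have hg2 : MemLp (fun u => |fk k u - f u|) (ENNReal.ofReal 2) μ01 := by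
      rw [h2]
      exact (hdiffmem k).norm.ae_eq (Eventually.of_forall fun u => by simp [Real.norm_eq_abs])
    have hH := integral_mul_le_Lp_mul_Lq_of_nonneg hpq
      (Eventually.of_forall fun u => abs_nonneg (f u))
      (Eventually.of_forall fun u => abs_nonneg (fk k u - f u)) hf2 hg2
    have e1 : ∫ u, |f u| ^ (2:ℝ) ∂μ01 = ∫ u, (f u)^2 ∂μ01 :=
      integral_congr_ae (Eventually.of_forall fun u => hrpow2 _)
    have e2 : ∫ u, |fk k u - f u| ^ (2:ℝ) ∂μ01 = (D k)^2 := by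
      rw [← hA k]
      exact integral_congr_ae (Eventually.of_forall fun u => hrpow2 _)
    rw [e1, e2] at hH
    have e3 : ((D k)^2) ^ ((1:ℝ)/2) = D k := by
      rw [one_div, ← Real.rpow_natCast (D k) 2, ← Real.rpow_mul (hDnn k)]
      norm_num
    rw [e3] at hH
    exact hH
  have hbound : ∀ k, |F ((τk k).toFun t) - F (τ.toFun t)| ≤ (D k)^2 + 2*(C * D k) := by
    intro k
    have e1 : F ((τk k).toFun t) = ∫ s in Set.Ioc (0:ℝ) t, (fk k s)^2 :=
      (RepAux.act_setIntegral (τk k) hq ht).symm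
    have e2 : F (τ.toFun t) = ∫ s in Set.Ioc (0:ℝ) t, (f s)^2 :=
      (RepAux.act_setIntegral τ hq ht).symm
    have i1 : Integrable (fun s => (fk k s)^2) (volume.restrict (Set.Ioc 0 t)) :=
      (hfksq k).mono_measure (RepAux.restrict_le_mu01 ht)
    have i2 : Integrable (fun s => (f s)^2) (volume.restrict (Set.Ioc 0 t)) :=
      hfsq.mono_measure (RepAux.restrict_le_mu01 ht)
    have e3 : F ((τk k).toFun t) - F (τ.toFun t)
        = ∫ s in Set.Ioc (0:ℝ) t, ((fk k s)^2 - (f s)^2) := by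
      rw [e1, e2, integral_sub i1 i2]
    have h4 : |∫ s in Set.Ioc (0:ℝ) t, ((fk k s)^2 - (f s)^2)|
        ≤ ∫ s in Set.Ioc (0:ℝ) t, |(fk k s)^2 - (f s)^2| := by
      have := norm_integral_le_integral_norm (μ := volume.restrict (Set.Ioc 0 t))
        (f := fun s => (fk k s)^2 - (f s)^2)
      simpa [Real.norm_eq_abs] using this
    have habsint : Integrable (fun s => |(fk k s)^2 - (f s)^2|) μ01 := ((hfksq k).sub hfsq).abs
    have h5 : ∫ s in Set.Ioc (0:ℝ) t, |(fk k s)^2 - (f s)^2|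
        ≤ ∫ s, |(fk k s)^2 - (f s)^2| ∂μ01 :=
      integral_mono_measure (RepAux.restrict_le_mu01 ht)
        (Eventually.of_forall fun s => abs_nonneg _) habsint
    have h6 : ∫ s, |(fk k s)^2 - (f s)^2| ∂μ01
        ≤ ∫ s, ((fk k s - f s)^2 + 2*(|f s| * |fk k s - f s|)) ∂μ01 := by
      refine integral_mono habsint ((hdiffsq k).add ((hprod k).const_mul 2)) (fun s => ?_)
      have hid : (fk k s)^2 - (f s)^2 = (fk k s - f s)^2 + 2*((f s)*(fk k s - f s)) := by ring
      calc |(fk k s)^2 - (f s)^2|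
          = |(fk k s - f s)^2 + 2*((f s)*(fk k s - f s))| := by rw [hid]
        _ ≤ |(fk k s - f s)^2| + |2*((f s)*(fk k s - f s))| := abs_add_le _ _
        _ = (fk k s - f s)^2 + 2*(|f s| * |fk k s - f s|) := by
            rw [abs_of_nonneg (sq_nonneg _), abs_mul, abs_mul, abs_two]
    have h7 : ∫ s, ((fk k s - f s)^2 + 2*(|f s| * |fk k s - f s|)) ∂μ01
        = (D k)^2 + 2 * ∫ s, |f s| * |fk k s - f s| ∂μ01 := by
      rw [integral_add (hdiffsq k) ((hprod k).const_mul 2), hA k, MeasureTheory.integral_const_mul]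
    have h8 : 2 * ∫ s, |f s| * |fk k s - f s| ∂μ01 ≤ 2*(C * D k) := by
      have := hCS k; linarith
    rw [e3]
    calc |∫ s in Set.Ioc (0:ℝ) t, ((fk k s)^2 - (f s)^2)|
        ≤ ∫ s in Set.Ioc (0:ℝ) t, |(fk k s)^2 - (f s)^2| := h4
      _ ≤ ∫ s, |(fk k s)^2 - (f s)^2| ∂μ01 := h5
      _ ≤ ∫ s, ((fk k s - f s)^2 + 2*(|f s| * |fk k s - f s|)) ∂μ01 := h6
      _ = (D k)^2 + 2 * ∫ s, |f s| * |fk k s - f s| ∂μ01 := h7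
      _ ≤ (D k)^2 + 2*(C * D k) := by linarith
  have htendsF : Tendsto (fun k => F ((τk k).toFun t)) atTop (nhds (F (τ.toFun t))) := by
    rw [tendsto_iff_dist_tendsto_zero]
    refine squeeze_zero (g := fun k => (D k)^2 + 2*(C * D k)) (fun k => dist_nonneg) (fun k => ?_) ?_
    · rw [Real.dist_eq]; exact hbound k
    · have h1 : Tendsto (fun k => (D k)^2 + 2*(C * D k)) atTop (nhds ((0:ℝ)^2 + 2*(C*0))) := by
        refine Tendsto.add ?_ ?_
        · exact hDconv.pow 2
        · exact (tendsto_const_nhds.mul hDconv).const_mul 2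
      simpa using h1
  rw [Metric.tendsto_atTop]
  intro ε hε
  set x : ℝ := τ.toFun t with hxdef
  have hx : x ∈ Set.Icc (0:ℝ) 1 := RepAux.toFun_mem τ ht
  have hxk : ∀ k, (τk k).toFun t ∈ Set.Icc (0:ℝ) 1 := fun k => RepAux.toFun_mem (τk k) ht
  have hδ1 : ∃ δ1 > 0, ∀ y ∈ Set.Icc (0:ℝ) 1, x + ε ≤ y → δ1 ≤ F y - F x := by
    by_cases h1 : x + ε ≤ 1
    · refine ⟨F (x+ε) - F x, sub_pos.2 (RepAux.Ffun_lt hq h0 hx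
        (Set.mem_Icc.2 ⟨by linarith [hx.1], h1⟩) (by linarith)), fun y hy hxy => ?_⟩
      have := RepAux.Ffun_le hq h0 (Set.mem_Icc.2 ⟨by linarith [hx.1], h1⟩) hy hxy
      linarith
    · refine ⟨1, one_pos, fun y hy hxy => absurd (hxy.trans hy.2) (by push_neg at h1; linarith)⟩
  have hδ2 : ∃ δ2 > 0, ∀ y ∈ Set.Icc (0:ℝ) 1, y ≤ x - ε → δ2 ≤ F x - F y := by
    by_cases h2 : 0 ≤ x - ε
    · refine ⟨F x - F (x-ε), sub_pos.2 (RepAux.Ffun_lt hq h0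
        (Set.mem_Icc.2 ⟨h2, by linarith [hx.2]⟩) hx (by linarith)), fun y hy hxy => ?_⟩
      have := RepAux.Ffun_le hq h0 hy (Set.mem_Icc.2 ⟨h2, by linarith [hx.2]⟩) hxy
      linarith
    · refine ⟨1, one_pos, fun y hy hxy => absurd (hy.1.trans hxy) (by push_neg at h2; linarith)⟩
  obtain ⟨δ1, hδ1pos, hδ1⟩ := hδ1
  obtain ⟨δ2, hδ2pos, hδ2⟩ := hδ2
  obtain ⟨N, hN⟩ := (Metric.tendsto_atTop.1 htendsF) (min δ1 δ2) (lt_min hδ1pos hδ2pos)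
  refine ⟨N, fun k hk => ?_⟩
  have hFk := hN k hk
  rw [Real.dist_eq] at hFk
  rw [Real.dist_eq, abs_lt]
  constructor
  · by_contra hcon
    push_neg at hcon
    have h' : (τk k).toFun t ≤ x - ε := by linarith
    have hd := hδ2 _ (hxk k) h'
    have habs : F x - F ((τk k).toFun t) ≤ |F ((τk k).toFun t) - F x| := by
      rw [abs_sub_comm]; exact le_abs_self _
    have := lt_of_le_of_lt (hd.trans habs) hFk
    have := this.trans_le (min_le_right _ _)
    linarith
  · by_contra hcon
    push_neg at hcon
    have h' : x + ε ≤ (τk k).toFun t := by linarith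
    have hd := hδ1 _ (hxk k) h'
    have habs : F ((τk k).toFun t) - F x ≤ |F ((τk k).toFun t) - F x| := le_abs_self _
    have := lt_of_le_of_lt (hd.trans habs) hFk
    have := this.trans_le (min_le_left _ _)
    linarith


end
end

section
/- Let q ∈ L²(I,ℝᴺ) satisfy |q(t)| = 1 for almost every t ∈ I. Then the closure of the Γ-orbit of q equals the Γ̃-orbit of q: [q] = qΓ̃ = {q*γ : γ ∈ Γ̃}. -/
open MeasureTheory Set Filter

noncomputable section

variable {E : Type*} [NormedAddCommGroup E] [InnerProductSpace ℝ E]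

open scoped ENNReal NNReal

namespace GammaTilde

lemma aesm (γ : GammaTilde) : AEStronglyMeasurable γ.deriv' μ01 :=
  γ.integrableOn.aestronglyMeasurable

/-- A globally measurable, everywhere nonnegative version of `deriv'`,
vanishing outside `[0,1]`. -/
def d (γ : GammaTilde) : ℝ → ℝ :=
  (Set.Icc (0:ℝ) 1).indicator (fun s => max (γ.aesm.mk γ.deriv' s) 0)

lemma measurable_d (γ : GammaTilde) : Measurable γ.d :=
  ((γ.aesm.stronglyMeasurable_mk.measurable).max measurable_const).indicator
    measurableSet_Icc

lemma measurable_ennreal_ofReal_d (γ : GammaTilde) :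
    Measurable (fun t => ENNReal.ofReal (γ.d t)) :=
  γ.measurable_d.ennreal_ofReal

lemma d_nonneg (γ : GammaTilde) (t : ℝ) : 0 ≤ γ.d t := by
  unfold d
  by_cases h : t ∈ Set.Icc (0:ℝ) 1
  · rw [Set.indicator_of_mem h]; exact le_max_right _ _
  · rw [Set.indicator_of_notMem h]

lemma d_eq_zero (γ : GammaTilde) {t : ℝ} (h : t ∉ Set.Icc (0:ℝ) 1) : γ.d t = 0 :=
  Set.indicator_of_notMem h _

lemma d_ae_eq (γ : GammaTilde) : γ.d =ᵐ[μ01] γ.deriv' := by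
  have h1 : ∀ᵐ t ∂μ01, t ∈ Set.Icc (0:ℝ) 1 := ae_restrict_mem measurableSet_Icc
  have h2 := γ.aesm.ae_eq_mk
  filter_upwards [h1, h2, γ.nonneg] with t ht heq hnn
  rw [d, Set.indicator_of_mem ht, ← heq, max_eq_left hnn]

lemma integrable_d (γ : GammaTilde) : Integrable γ.d volume := by
  rw [d, integrable_indicator_iff measurableSet_Icc]
  have : IntegrableOn γ.deriv' (Set.Icc (0:ℝ) 1) volume := γ.integrableOn
  have hmk : IntegrableOn (γ.aesm.mk γ.deriv') (Set.Icc (0:ℝ) 1) volume :=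
    this.congr_fun_ae γ.aesm.ae_eq_mk
  exact hmk.pos_part

lemma integrable_d_mu (γ : GammaTilde) : Integrable γ.d μ01 := γ.integrable_d.restrict

/-- The continuous primitive of `d`. -/
def prim (γ : GammaTilde) : ℝ → ℝ := fun t => ∫ u in (0:ℝ)..t, γ.d u

lemma continuous_prim (γ : GammaTilde) : Continuous γ.prim :=
  intervalIntegral.continuous_primitive (fun _ _ => γ.integrable_d.intervalIntegrable) 0

lemma monotone_prim (γ : GammaTilde) : Monotone γ.prim := by
  intro s t hst
  have h := intervalIntegral.integral_add_adjacent_intervals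
    (a := 0) (b := s) (c := t)
    γ.integrable_d.intervalIntegrable γ.integrable_d.intervalIntegrable
  have h2 := intervalIntegral.integral_nonneg (μ := volume) hst (fun u _ => γ.d_nonneg u)
  simp only [prim]
  nlinarith

lemma prim_eq_toFun (γ : GammaTilde) {t : ℝ} (ht : t ∈ Set.Icc (0:ℝ) 1) :
    γ.prim t = γ.toFun t := by
  rw [γ.eq_integral t ht, prim]
  apply intervalIntegral.integral_congr_ae
  have := (ae_restrict_iff' measurableSet_Icc).1 γ.d_ae_eq
  filter_upwards [this] with u hu huIoc
  rw [Set.uIoc_of_le ht.1] at huIoc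
  exact hu ⟨le_of_lt huIoc.1, huIoc.2.trans ht.2⟩

lemma prim_zero (γ : GammaTilde) : γ.prim 0 = 0 := by simp [prim]

lemma prim_one (γ : GammaTilde) : γ.prim 1 = 1 := by
  rw [γ.prim_eq_toFun (by norm_num : (1:ℝ) ∈ Set.Icc (0:ℝ) 1), γ.map_one]

end GammaTilde
namespace GammaTilde

lemma ae_ne_zero' : ∀ᵐ u ∂(volume : Measure ℝ), u ≠ (0:ℝ) := by
  have h : (volume : Measure ℝ) {(0:ℝ)} = 0 := measure_singleton 0
  refine ae_iff.2 ?_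
  convert h using 2
  ext x; simp

lemma setIntegral_d_zero (γ : GammaTilde) {s : Set ℝ} (hs : MeasurableSet s)
    (h : ∀ x ∈ s, x ≠ 0 → γ.d x = 0) : ∫ x in s, γ.d x = 0 := by
  have h2 : γ.d =ᵐ[volume.restrict s] (fun _ => (0:ℝ)) := by
    refine (ae_restrict_iff' hs).2 ?_
    filter_upwards [ae_ne_zero'] with x hx hxs
    exact h x hxs hx
  rw [integral_congr_ae h2, integral_zero]

lemma prim_of_nonpos (γ : GammaTilde) {t : ℝ} (ht : t ≤ 0) : γ.prim t = 0 := by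
  rw [prim, ← neg_eq_zero, ← intervalIntegral.integral_symm]
  rw [intervalIntegral.integral_of_le ht]
  exact γ.setIntegral_d_zero measurableSet_Ioc (fun x hx hxne =>
    γ.d_eq_zero (fun hmem => hxne (le_antisymm hx.2 hmem.1)))

lemma prim_of_ge_one (γ : GammaTilde) {t : ℝ} (ht : 1 ≤ t) : γ.prim t = 1 := by
  have h := intervalIntegral.integral_add_adjacent_intervals (a := (0:ℝ)) (b := 1) (c := t)
    γ.integrable_d.intervalIntegrable γ.integrable_d.intervalIntegrable
  have h2 : (∫ u in (1:ℝ)..t, γ.d u) = 0 := by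
    rw [intervalIntegral.integral_of_le ht]
    exact γ.setIntegral_d_zero measurableSet_Ioc (fun x hx _ =>
      γ.d_eq_zero (fun hmem => absurd hmem.2 (not_le.2 hx.1)))
  have h1 : γ.prim 1 = 1 := γ.prim_one
  simp only [prim] at *
  linarith

lemma prim_mem (γ : GammaTilde) (t : ℝ) : γ.prim t ∈ Set.Icc (0:ℝ) 1 := by
  constructor
  · rcases le_or_gt t 0 with h | h
    · rw [γ.prim_of_nonpos h]
    · rw [← γ.prim_zero]; exact γ.monotone_prim h.le
  · rcases le_or_gt t 1 with h | h
    · rw [← γ.prim_one]; exact γ.monotone_prim h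
    · rw [γ.prim_of_ge_one h.le]

/-- The measure `γ'·λ`. -/
def rho (γ : GammaTilde) : Measure ℝ :=
  volume.withDensity (fun t => ENNReal.ofReal (γ.d t))

lemma setIntegral_d_Iic (γ : GammaTilde) (u : ℝ) :
    ∫ s in Set.Iic u, γ.d s = γ.prim u := by
  rcases le_or_gt u 0 with h | h
  · rw [γ.prim_of_nonpos h]
    exact γ.setIntegral_d_zero measurableSet_Iic (fun x hx hxne =>
      γ.d_eq_zero (fun hmem => hxne (le_antisymm (hx.trans h) hmem.1)))
  · have hsplit : Set.Iic u = Set.Iic 0 ∪ Set.Ioc 0 u := by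
      rw [Set.Iic_union_Ioc_eq_Iic h.le]
    rw [hsplit, setIntegral_union (Set.Iic_disjoint_Ioc le_rfl) measurableSet_Ioc
        γ.integrable_d.integrableOn γ.integrable_d.integrableOn]
    have h0 : ∫ s in Set.Iic (0:ℝ), γ.d s = 0 :=
      γ.setIntegral_d_zero measurableSet_Iic (fun x hx hxne =>
        γ.d_eq_zero (fun hmem => hxne (le_antisymm hx hmem.1)))
    rw [h0, zero_add, prim, intervalIntegral.integral_of_le h.le]

lemma rho_Iic (γ : GammaTilde) (u : ℝ) :
    γ.rho (Set.Iic u) = ENNReal.ofReal (γ.prim u) := by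
  rw [rho, withDensity_apply _ measurableSet_Iic, ← γ.setIntegral_d_Iic u]
  rw [← ofReal_integral_eq_lintegral_ofReal γ.integrable_d.integrableOn
    (Filter.Eventually.of_forall (fun s => γ.d_nonneg s))]

lemma rho_univ (γ : GammaTilde) : γ.rho Set.univ = 1 := by
  have : γ.rho Set.univ = ∫⁻ t, ENNReal.ofReal (γ.d t) ∂volume := by
    rw [rho, withDensity_apply _ MeasurableSet.univ, Measure.restrict_univ]
  rw [this, ← ofReal_integral_eq_lintegral_ofReal γ.integrable_d
    (Filter.Eventually.of_forall (fun s => γ.d_nonneg s))]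
  have : ∫ t, γ.d t ∂volume = γ.prim 1 := by
    rw [← γ.setIntegral_d_Iic 1]
    rw [← integral_indicator measurableSet_Iic]
    congr 1
    funext s
    by_cases h : s ∈ Set.Iic (1:ℝ)
    · rw [Set.indicator_of_mem h]
    · rw [Set.indicator_of_notMem h]
      exact γ.d_eq_zero (fun hmem => h hmem.2)
  rw [this, γ.prim_one, ENNReal.ofReal_one]

instance (γ : GammaTilde) : IsFiniteMeasure γ.rho :=
  ⟨by rw [γ.rho_univ]; exact ENNReal.one_lt_top⟩

lemma mu01_Iic (a : ℝ) : μ01 (Set.Iic a) = ENNReal.ofReal (min a 1 ⊔ 0) := by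
  rw [μ01, Measure.restrict_apply measurableSet_Iic]
  rcases lt_or_ge a 0 with h | h
  · have : Set.Iic a ∩ Set.Icc (0:ℝ) 1 = ∅ := by
      ext x; simp only [Set.mem_inter_iff, Set.mem_Iic, Set.mem_Icc, Set.mem_empty_iff_false,
        iff_false]
      rintro ⟨h1, h2, _⟩; linarith
    rw [this]
    simp only [measure_empty]
    symm
    rw [ENNReal.ofReal_eq_zero]
    simp only [sup_le_iff, le_refl, and_true, min_le_iff]
    left; linarith
  · rcases le_or_gt 1 a with h1 | h1
    · have : Set.Iic a ∩ Set.Icc (0:ℝ) 1 = Set.Icc 0 1 := by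
        apply Set.inter_eq_self_of_subset_right
        intro x hx; exact le_trans hx.2 h1
      rw [this, Real.volume_Icc]
      congr 1
      rw [min_eq_right h1]
      norm_num
    · have : Set.Iic a ∩ Set.Icc (0:ℝ) 1 = Set.Icc 0 a := by
        ext x; simp only [Set.mem_inter_iff, Set.mem_Iic, Set.mem_Icc]
        constructor
        · rintro ⟨hx, hx0, _⟩; exact ⟨hx0, hx⟩
        · rintro ⟨hx0, hx⟩; exact ⟨hx, hx0, by linarith⟩
      rw [this, Real.volume_Icc]
      congr 1
      rw [min_eq_left h1.le, max_eq_left h]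
      ring

lemma map_prim_rho (γ : GammaTilde) : Measure.map γ.prim γ.rho = μ01 := by
  have hmeas : Measurable γ.prim := γ.continuous_prim.measurable
  have : IsFiniteMeasure (Measure.map γ.prim γ.rho) :=
    Measure.isFiniteMeasure_map γ.rho γ.prim
  apply MeasureTheory.Measure.ext_of_Iic
  intro a
  rw [Measure.map_apply hmeas measurableSet_Iic, mu01_Iic]
  rcases lt_or_ge a 0 with h | h
  · have : γ.prim ⁻¹' (Set.Iic a) = ∅ := by
      ext t; simp only [Set.mem_preimage, Set.mem_Iic, Set.mem_empty_iff_false, iff_false]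
      intro hle; exact absurd (le_trans (γ.prim_mem t).1 hle) (not_le.2 h)
    rw [this]
    simp only [measure_empty]
    symm
    rw [ENNReal.ofReal_eq_zero, min_eq_left (by linarith : a ≤ 1)]
    simp [le_max_iff]; linarith
  · rcases le_or_gt 1 a with h1 | h1
    · have : γ.prim ⁻¹' (Set.Iic a) = Set.univ := by
        ext t; simp only [Set.mem_preimage, Set.mem_Iic, Set.mem_univ, iff_true]
        exact le_trans (γ.prim_mem t).2 h1
      rw [this, γ.rho_univ, min_eq_right h1]
      norm_num
    · -- 0 ≤ a < 1
      set S := γ.prim ⁻¹' (Set.Iic a) with hS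
      have hSclosed : IsClosed S := IsClosed.preimage γ.continuous_prim isClosed_Iic
      have hSne : S.Nonempty := ⟨0, by simp [hS, Set.mem_preimage, γ.prim_zero, h]⟩
      have hSbdd : BddAbove S := by
        refine ⟨1, fun t ht => ?_⟩
        by_contra hgt
        push_neg at hgt
        have : γ.prim t = 1 := γ.prim_of_ge_one hgt.le
        have : γ.prim t ≤ a := ht
        linarith
      set u := sSup S with hu
      have huS : u ∈ S := hSclosed.csSup_mem hSne hSbdd
      have hSeq : S = Set.Iic u := by
        apply Set.eq_of_subset_of_subset
        · exact fun t ht => le_csSup hSbdd ht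
        · intro t ht
          exact le_trans (γ.monotone_prim ht) huS
      have hprimu : γ.prim u = a := by
        rcases lt_or_ge (γ.prim u) a with hlt | hle
        · exfalso
          have hu1 : u < 1 := by
            by_contra hge
            push_neg at hge
            rw [γ.prim_of_ge_one hge] at hlt
            linarith
          have hcont := (γ.continuous_prim.tendsto u).eventually
            (eventually_lt_nhds hlt)
          rcases Metric.eventually_nhds_iff.1 hcont with ⟨δ, hδ, hball⟩
          have hdist : dist (u + δ/2) u < δ := by
            rw [Real.dist_eq]
            have : u + δ/2 - u = δ/2 := by ring
            rw [this, abs_of_pos (by linarith)]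
            linarith
          have hmem : u + δ/2 ∈ S := le_of_lt (hball hdist)
          have := le_csSup hSbdd hmem
          linarith
        · exact le_antisymm huS hle
      rw [hSeq, γ.rho_Iic, hprimu, min_eq_left h1.le, max_eq_left h]

end GammaTilde
lemma mu01_univ : μ01 Set.univ = 1 := by
  rw [μ01, Measure.restrict_apply_univ, Real.volume_Icc]
  norm_num

instance : IsFiniteMeasure μ01 := ⟨by rw [mu01_univ]; exact ENNReal.one_lt_top⟩

instance : IsProbabilityMeasure μ01 := ⟨mu01_univ⟩

namespace GammaTilde

lemma lintegral_cov (γ : GammaTilde) {f : ℝ → ℝ≥0∞} (hf : Measurable f) :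
    ∫⁻ t, f t ∂μ01 = ∫⁻ t, ENNReal.ofReal (γ.d t) * f (γ.prim t) ∂μ01 := by
  have hg : Measurable fun a => f (γ.prim a) := hf.comp γ.continuous_prim.measurable
  conv_lhs => rw [← γ.map_prim_rho]
  rw [lintegral_map hf γ.continuous_prim.measurable, rho,
    lintegral_withDensity_eq_lintegral_mul _ (measurable_ennreal_ofReal_d γ) hg]
  have heq : (fun t => ENNReal.ofReal (γ.d t) * f (γ.prim t)) =
      (Set.Icc (0:ℝ) 1).indicator (fun t => ENNReal.ofReal (γ.d t) * f (γ.prim t)) := by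
    funext t
    by_cases ht : t ∈ Set.Icc (0:ℝ) 1
    · rw [Set.indicator_of_mem ht]
    · rw [Set.indicator_of_notMem ht, γ.d_eq_zero ht, ENNReal.ofReal_zero, zero_mul]
  calc ∫⁻ t, ((fun s => ENNReal.ofReal (γ.d s)) * fun s => f (γ.prim s)) t ∂volume
      = ∫⁻ t, (Set.Icc (0:ℝ) 1).indicator (fun s => ENNReal.ofReal (γ.d s) * f (γ.prim s)) t
        ∂volume := by rw [← heq]; rfl
    _ = ∫⁻ t in Set.Icc (0:ℝ) 1, ENNReal.ofReal (γ.d t) * f (γ.prim t) ∂volume :=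
        lintegral_indicator measurableSet_Icc _
    _ = ∫⁻ t, ENNReal.ofReal (γ.d t) * f (γ.prim t) ∂μ01 := rfl

lemma null_cov (γ : GammaTilde) {s : Set ℝ} (hs : MeasurableSet s) (h0 : μ01 s = 0) :
    ∀ᵐ t ∂μ01, γ.prim t ∈ s → γ.d t = 0 := by
  have hf : Measurable (s.indicator (fun _ => (1:ℝ≥0∞))) :=
    measurable_const.indicator hs
  have key : ∫⁻ t, ENNReal.ofReal (γ.d t) * s.indicator (fun _ => (1:ℝ≥0∞)) (γ.prim t) ∂μ01
      = 0 := by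
    rw [← γ.lintegral_cov hf, lintegral_indicator hs _, setLIntegral_one _, h0]
  have hmeas : Measurable fun t =>
      ENNReal.ofReal (γ.d t) * s.indicator (fun _ => (1:ℝ≥0∞)) (γ.prim t) :=
    (measurable_ennreal_ofReal_d γ).mul (hf.comp γ.continuous_prim.measurable)
  have := (lintegral_eq_zero_iff hmeas).1 key
  filter_upwards [this] with t ht hts
  simp only [Set.indicator_of_mem hts, mul_one, Pi.zero_apply] at ht
  rw [ENNReal.ofReal_eq_zero] at ht
  exact le_antisymm ht (γ.d_nonneg t)

lemma integral_cov (γ : GammaTilde) {h : ℝ → ℝ} (hm : Measurable h) (h0 : ∀ t, 0 ≤ h t) :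
    ∫ t, γ.d t * h (γ.prim t) ∂μ01 = ∫ t, h t ∂μ01 := by
  rw [integral_eq_lintegral_of_nonneg_ae (Filter.Eventually.of_forall h0)
    (hm.aestronglyMeasurable), integral_eq_lintegral_of_nonneg_ae
    (Filter.Eventually.of_forall (fun t => mul_nonneg (γ.d_nonneg t) (h0 (γ.prim t))))
    ((γ.measurable_d.mul (hm.comp γ.continuous_prim.measurable)).aestronglyMeasurable)]
  congr 1
  rw [γ.lintegral_cov hm.ennreal_ofReal]
  apply lintegral_congr
  intro t
  rw [ENNReal.ofReal_mul (γ.d_nonneg t)]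

lemma integral_d_mu (γ : GammaTilde) : ∫ t, γ.d t ∂μ01 = 1 := by
  have := γ.integral_cov (h := fun _ => (1:ℝ)) measurable_const (fun _ => zero_le_one)
  simpa using this

end GammaTilde
section Helpers

variable {E : Type*} [NormedAddCommGroup E] [InnerProductSpace ℝ E]

lemma sqrt_integral_sq_eq {f : ℝ → E} (hf : MemLp f 2 μ01) :
    Real.sqrt (∫ t, ‖f t‖^2 ∂μ01) = (eLpNorm f 2 μ01).toReal := by
  have h2 : eLpNorm f 2 μ01 = (∫⁻ x, (‖f x‖₊ : ℝ≥0∞) ^ (2:ℝ) ∂μ01) ^ (1/(2:ℝ)) := by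
    rw [eLpNorm_eq_lintegral_rpow_enorm_toReal two_ne_zero ENNReal.ofNat_ne_top]
    norm_num [enorm_eq_nnnorm]
  have h3 : ∫ t, ‖f t‖^2 ∂μ01 = (∫⁻ x, (‖f x‖₊ : ℝ≥0∞) ^ (2:ℝ) ∂μ01).toReal := by
    rw [integral_eq_lintegral_of_nonneg_ae
      (Filter.Eventually.of_forall (fun t => sq_nonneg _))
      ((hf.1.norm.pow 2).congr (Filter.Eventually.of_forall (fun t => by simp)))]
    · congr 1
      apply lintegral_congr
      intro t
      rw [← enorm_eq_nnnorm, ← ofReal_norm, ENNReal.ofReal_rpow_of_nonneg (norm_nonneg _)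
        (by norm_num)]
      norm_num
  rw [h3, h2, Real.sqrt_eq_rpow, ENNReal.toReal_rpow]

lemma L2dist_toLp {f g : ℝ → E} (hf : MemLp f 2 μ01) (hg : MemLp g 2 μ01) :
    L2dist f g = ‖hf.toLp f - hg.toLp g‖ := by
  rw [← MemLp.toLp_sub, Lp.norm_toLp, L2dist, ← sqrt_integral_sq_eq (hf.sub hg)]
  rfl

lemma L2dist_congr {r r' s s' : ℝ → E} (h : r =ᵐ[μ01] r') (h2 : s =ᵐ[μ01] s') :
    L2dist r s = L2dist r' s' := by
  unfold L2dist
  congr 1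
  apply integral_congr_ae
  filter_upwards [h, h2] with t ht ht2
  rw [ht, ht2]

lemma integral_CS {f g : ℝ → ℝ} (hf : MemLp f 2 μ01) (hg : MemLp g 2 μ01)
    (hf0 : ∀ t, 0 ≤ f t) (hg0 : ∀ t, 0 ≤ g t) :
    ∫ t, f t * g t ∂μ01 ≤ Real.sqrt (∫ t, f t^2 ∂μ01) * Real.sqrt (∫ t, g t^2 ∂μ01) := by
  have hpq : Real.HolderConjugate 2 2 := Real.HolderConjugate.two_two
  have h2 : ENNReal.ofReal (2:ℝ) = 2 := by norm_num
  have key := integral_mul_norm_le_Lp_mul_Lq (μ := μ01) hpq (h2 ▸ hf) (h2 ▸ hg)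
  have e1 : ∫ a, ‖f a‖ * ‖g a‖ ∂μ01 = ∫ t, f t * g t ∂μ01 := by
    apply integral_congr_ae; filter_upwards with t
    rw [Real.norm_of_nonneg (hf0 t), Real.norm_of_nonneg (hg0 t)]
  have e2 : ∫ a, ‖f a‖ ^ (2:ℝ) ∂μ01 = ∫ t, f t^2 ∂μ01 := by
    apply integral_congr_ae; filter_upwards with t
    rw [Real.norm_of_nonneg (hf0 t)]
    norm_num [Real.rpow_natCast]
  have e3 : ∫ a, ‖g a‖ ^ (2:ℝ) ∂μ01 = ∫ t, g t^2 ∂μ01 := by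
    apply integral_congr_ae; filter_upwards with t
    rw [Real.norm_of_nonneg (hg0 t)]
    norm_num [Real.rpow_natCast]
  rw [e1, e2, e3] at key
  calc ∫ t, f t * g t ∂μ01 ≤ (∫ t, f t^2 ∂μ01) ^ (1/(2:ℝ)) * (∫ t, g t^2 ∂μ01) ^ (1/(2:ℝ)) :=
        key
    _ = _ := by rw [Real.sqrt_eq_rpow, Real.sqrt_eq_rpow]

lemma memℒp_of_sq_integrable {f : ℝ → ℝ} (hm : AEStronglyMeasurable f μ01)
    (h : Integrable (fun t => f t^2) μ01) : MemLp f 2 μ01 :=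
  (memLp_two_iff_integrable_sq hm).2 h

/-- AM-GM for square roots. -/
lemma sqrt_mul_le_add {a b : ℝ} (ha : 0 ≤ a) (hb : 0 ≤ b) :
    Real.sqrt a * Real.sqrt b ≤ (a + b) / 2 := by
  nlinarith [sq_nonneg (Real.sqrt a - Real.sqrt b), Real.sq_sqrt ha, Real.sq_sqrt hb,
    Real.sqrt_nonneg a, Real.sqrt_nonneg b]

end Helpers
section QSec

variable {E : Type*} [NormedAddCommGroup E] [InnerProductSpace ℝ E]

lemma inner_toLp {f g : ℝ → E} (hf : MemLp f 2 μ01) (hg : MemLp g 2 μ01) :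
    (inner ℝ (hf.toLp f) (hg.toLp g) : ℝ) = ∫ t, (inner ℝ (f t) (g t) : ℝ) ∂μ01 := by
  rw [L2.inner_def]
  apply integral_congr_ae
  filter_upwards [hf.coeFn_toLp, hg.coeFn_toLp] with t h1 h2
  rw [h1, h2]

/-- The action written with the regularized data `d`, `prim`, and the
everywhere-unit-norm representative `Q`. -/
def Af (Q : ℝ → E) (γ : GammaTilde) : ℝ → E := fun t => Real.sqrt (γ.d t) • Q (γ.prim t)

lemma memℒp_Q {Q : ℝ → E} (hQm : StronglyMeasurable Q) (hQ1 : ∀ t, ‖Q t‖ = 1) :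
    MemLp Q 2 μ01 :=
  MemLp.of_bound hQm.aestronglyMeasurable 1 (Filter.Eventually.of_forall fun t => (hQ1 t).le)

lemma Af_norm {Q : ℝ → E} (hQ1 : ∀ t, ‖Q t‖ = 1) (γ : GammaTilde) (t : ℝ) :
    ‖Af Q γ t‖ = Real.sqrt (γ.d t) := by
  rw [Af, norm_smul, Real.norm_of_nonneg (Real.sqrt_nonneg _), hQ1, mul_one]

lemma Af_norm_sq {Q : ℝ → E} (hQ1 : ∀ t, ‖Q t‖ = 1) (γ : GammaTilde) (t : ℝ) :
    ‖Af Q γ t‖^2 = γ.d t := by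
  rw [Af_norm hQ1, Real.sq_sqrt (γ.d_nonneg t)]

lemma Af_sm {Q : ℝ → E} (hQm : StronglyMeasurable Q) (γ : GammaTilde) :
    StronglyMeasurable (Af Q γ) :=
  (Real.continuous_sqrt.measurable.comp γ.measurable_d).stronglyMeasurable.smul
    (hQm.comp_measurable γ.continuous_prim.measurable)

lemma memℒp_Af {Q : ℝ → E} (hQm : StronglyMeasurable Q) (hQ1 : ∀ t, ‖Q t‖ = 1)
    (γ : GammaTilde) : MemLp (Af Q γ) 2 μ01 := by
  refine (memLp_two_iff_integrable_sq_norm (Af_sm hQm γ).aestronglyMeasurable).2 ?_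
  exact γ.integrable_d_mu.congr
    (Filter.Eventually.of_forall fun t => (Af_norm_sq hQ1 γ t).symm)

/-- The orbit element as a point of `L²`. -/
def TT {Q : ℝ → E} (hQm : StronglyMeasurable Q) (hQ1 : ∀ t, ‖Q t‖ = 1) (γ : GammaTilde) :
    Lp E 2 μ01 := (memℒp_Af hQm hQ1 γ).toLp _

lemma integrable_cross (γ δ : GammaTilde) :
    Integrable (fun t => Real.sqrt (γ.d t) * Real.sqrt (δ.d t)) μ01 := by
  refine Integrable.mono' ((γ.integrable_d_mu.add δ.integrable_d_mu).div_const 2)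
    ((Real.continuous_sqrt.measurable.comp γ.measurable_d).mul
      (Real.continuous_sqrt.measurable.comp δ.measurable_d)).aestronglyMeasurable ?_
  filter_upwards with t
  rw [Real.norm_of_nonneg (mul_nonneg (Real.sqrt_nonneg _) (Real.sqrt_nonneg _))]
  exact sqrt_mul_le_add (γ.d_nonneg t) (δ.d_nonneg t)

lemma integrable_cross_mul {h : ℝ → ℝ} (γ δ : GammaTilde)
    (hm : AEStronglyMeasurable h μ01) {C : ℝ} (hC : 0 ≤ C)
    (hb : ∀ᵐ t ∂μ01, |h t| ≤ C) :
    Integrable (fun t => Real.sqrt (γ.d t) * Real.sqrt (δ.d t) * h t) μ01 := by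
  refine Integrable.mono' (((γ.integrable_d_mu.add δ.integrable_d_mu).div_const 2).const_mul C)
    (((Real.continuous_sqrt.measurable.comp γ.measurable_d).mul
      (Real.continuous_sqrt.measurable.comp δ.measurable_d)).aestronglyMeasurable.mul hm) ?_
  filter_upwards [hb] with t ht
  rw [Real.norm_eq_abs, abs_mul, abs_of_nonneg (mul_nonneg (Real.sqrt_nonneg _)
    (Real.sqrt_nonneg _)), Pi.add_apply]
  calc Real.sqrt (γ.d t) * Real.sqrt (δ.d t) * |h t|
      ≤ ((γ.d t + δ.d t) / 2) * C := by
        apply mul_le_mul (sqrt_mul_le_add (γ.d_nonneg t) (δ.d_nonneg t)) ht (abs_nonneg _)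
        have h1 := γ.d_nonneg t; have h2 := δ.d_nonneg t; linarith
    _ = C * ((γ.d t + δ.d t) / 2) := mul_comm _ _

lemma inner_TT {Q : ℝ → E} (hQm : StronglyMeasurable Q) (hQ1 : ∀ t, ‖Q t‖ = 1)
    (γ δ : GammaTilde) :
    (inner ℝ (TT hQm hQ1 γ) (TT hQm hQ1 δ) : ℝ) =
      ∫ t, (Real.sqrt (γ.d t) * Real.sqrt (δ.d t)) *
        (inner ℝ (Q (γ.prim t)) (Q (δ.prim t)) : ℝ) ∂μ01 := by
  simp only [TT]
  rw [inner_toLp]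
  apply integral_congr_ae
  filter_upwards with t
  simp only [Af]
  rw [real_inner_smul_left, real_inner_smul_right]
  ring

lemma norm_TT {Q : ℝ → E} (hQm : StronglyMeasurable Q) (hQ1 : ∀ t, ‖Q t‖ = 1)
    (γ : GammaTilde) : ‖TT hQm hQ1 γ‖ = 1 := by
  have h : (inner ℝ (TT hQm hQ1 γ) (TT hQm hQ1 γ) : ℝ) = 1 := by
    rw [inner_TT hQm hQ1]
    have : ∀ t, (Real.sqrt (γ.d t) * Real.sqrt (γ.d t)) *
        (inner ℝ (Q (γ.prim t)) (Q (γ.prim t)) : ℝ) = γ.d t := by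
      intro t
      rw [Real.mul_self_sqrt (γ.d_nonneg t), real_inner_self_eq_norm_sq, hQ1, one_pow, mul_one]
    rw [integral_congr_ae (Filter.Eventually.of_forall this), γ.integral_d_mu]
  rw [@norm_eq_sqrt_real_inner, h, Real.sqrt_one]

lemma act_ae_Af {Q q : ℝ → E} (hq : q =ᵐ[μ01] Q) (γ : GammaTilde) :
    act q γ =ᵐ[μ01] Af Q γ := by
  set N := toMeasurable μ01 {s | q s ≠ Q s} ∩ Set.Icc (0:ℝ) 1 with hN
  have hNmeas : MeasurableSet N :=
    (measurableSet_toMeasurable μ01 _).inter measurableSet_Icc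
  have hNnull : μ01 N = 0 := by
    apply le_antisymm _ zero_le
    calc μ01 N ≤ μ01 (toMeasurable μ01 {s | q s ≠ Q s}) :=
          measure_mono Set.inter_subset_left
      _ = μ01 {s | q s ≠ Q s} := measure_toMeasurable _
      _ = 0 := hq
  have hcov := γ.null_cov hNmeas hNnull
  have hIcc : ∀ᵐ t ∂μ01, t ∈ Set.Icc (0:ℝ) 1 := ae_restrict_mem measurableSet_Icc
  filter_upwards [hcov, hIcc, γ.d_ae_eq] with t hc ht hd
  rw [act, ← γ.prim_eq_toFun ht, ← hd, Af]
  rcases eq_or_ne (γ.d t) 0 with h0 | h0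
  · rw [h0, Real.sqrt_zero, zero_smul, zero_smul]
  · have hnotN : γ.prim t ∉ N := fun hmem => h0 (hc hmem)
    have hnotT : γ.prim t ∉ toMeasurable μ01 {s | q s ≠ Q s} := by
      intro hmem
      exact hnotN ⟨hmem, γ.prim_mem t⟩
    have hqQ : q (γ.prim t) = Q (γ.prim t) := by
      by_contra hne
      exact hnotT (subset_toMeasurable μ01 _ hne)
    rw [hqQ]

end QSec
section Trunc

variable {E : Type*} [NormedAddCommGroup E] [InnerProductSpace ℝ E]

/-- Radial truncation to the unit ball. -/
def trunc (x : E) : E := (max 1 ‖x‖)⁻¹ • x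

lemma trunc_continuous : Continuous (trunc : E → E) :=
  ((continuous_const.max continuous_norm).inv₀
    (fun x => by positivity)).smul continuous_id

lemma trunc_norm_le (x : E) : ‖trunc x‖ ≤ 1 := by
  rw [trunc, norm_smul, Real.norm_of_nonneg (by positivity)]
  rcases le_or_gt ‖x‖ 1 with h | h
  · rw [max_eq_left h, inv_one, one_mul]; exact h
  · rw [max_eq_right h.le, inv_mul_cancel₀ (by positivity)]

lemma trunc_dist_le (x y : E) (hy : ‖y‖ ≤ 1) : ‖trunc x - y‖ ≤ ‖x - y‖ := by
  rcases le_or_gt ‖x‖ 1 with h | h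
  · rw [trunc, max_eq_left h, inv_one, one_smul]
  · have hx0 : (0:ℝ) < ‖x‖ := by linarith
    rw [trunc, max_eq_right h.le]
    have hsq : ‖(‖x‖⁻¹ • x) - y‖^2 ≤ ‖x - y‖^2 := by
      have e1 : ‖(‖x‖⁻¹ • x) - y‖^2 = ‖‖x‖⁻¹ • x‖^2 - 2 * (inner ℝ (‖x‖⁻¹ • x) y : ℝ) + ‖y‖^2 :=
        @norm_sub_sq_real E _ _ _ _
      have e2 : ‖x - y‖^2 = ‖x‖^2 - 2 * (inner ℝ x y : ℝ) + ‖y‖^2 := @norm_sub_sq_real E _ _ _ _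
      have e3 : ‖‖x‖⁻¹ • x‖ = 1 := by
        rw [norm_smul, Real.norm_of_nonneg (by positivity), inv_mul_cancel₀ (ne_of_gt hx0)]
      have e4 : (inner ℝ (‖x‖⁻¹ • x) y : ℝ) = ‖x‖⁻¹ * (inner ℝ x y : ℝ) := real_inner_smul_left _ _ _
      have e5 : (inner ℝ x y : ℝ) ≤ ‖x‖ := by
        calc (inner ℝ x y : ℝ) ≤ ‖x‖ * ‖y‖ := real_inner_le_norm x y
          _ ≤ ‖x‖ * 1 := by nlinarith
          _ = ‖x‖ := mul_one _
      have e6 : ‖x‖ * ‖x‖⁻¹ = 1 := mul_inv_cancel₀ (ne_of_gt hx0)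
      rw [e1, e2, e3, e4, one_pow]
      nlinarith [sq_nonneg (‖x‖ - 1)]
    nlinarith [norm_nonneg ((‖x‖⁻¹ • x) - y), norm_nonneg (x - y)]

lemma exists_trunc_approx {Q : ℝ → E} (hQm : StronglyMeasurable Q) (hQ1 : ∀ t, ‖Q t‖ = 1)
    {ε : ℝ} (hε : 0 < ε) :
    ∃ u : ℝ → E, Continuous u ∧ (∀ x, ‖u x‖ ≤ 1) ∧ ∫ t, ‖Q t - u t‖^2 ∂μ01 ≤ ε := by
  have hQ2 := memℒp_Q hQm hQ1
  obtain ⟨g, hg, hgmem⟩ := hQ2.exists_boundedContinuous_eLpNorm_sub_le ENNReal.ofNat_ne_top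
    (ε := ENNReal.ofReal (Real.sqrt ε)) (ne_of_gt (ENNReal.ofReal_pos.2 (Real.sqrt_pos.2 hε)))
  refine ⟨fun x => trunc (g x), trunc_continuous.comp g.continuous,
    fun x => trunc_norm_le _, ?_⟩
  have hgm : MemLp (fun x => (g : ℝ → E) x) 2 μ01 := hgmem
  have hsub : MemLp (Q - fun x => (g : ℝ → E) x) 2 μ01 := hQ2.sub hgm
  have key : ∫ t, ‖Q t - (g : ℝ → E) t‖^2 ∂μ01 ≤ ε := by
    have h1 : Real.sqrt (∫ t, ‖(Q - fun x => (g : ℝ → E) x) t‖^2 ∂μ01) =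
        (eLpNorm (Q - fun x => (g : ℝ → E) x) 2 μ01).toReal := sqrt_integral_sq_eq hsub
    have h2 : (eLpNorm (Q - fun x => (g : ℝ → E) x) 2 μ01).toReal ≤ Real.sqrt ε :=
      ENNReal.toReal_le_of_le_ofReal (Real.sqrt_nonneg _) hg
    have h3 : (0:ℝ) ≤ ∫ t, ‖(Q - fun x => (g : ℝ → E) x) t‖^2 ∂μ01 :=
      integral_nonneg (fun t => sq_nonneg _)
    have h4 : ∫ t, ‖(Q - fun x => (g : ℝ → E) x) t‖^2 ∂μ01 ≤ ε := by
      have := Real.sqrt_le_sqrt (le_of_eq h1.symm)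
      nlinarith [Real.sq_sqrt h3, Real.sq_sqrt hε.le, Real.sqrt_nonneg
        (∫ t, ‖(Q - fun x => (g : ℝ → E) x) t‖^2 ∂μ01), h1, h2]
    simpa using h4
  refine le_trans (le_trans ?_ (le_refl _)) key
  apply integral_mono_of_nonneg (Filter.Eventually.of_forall fun t => sq_nonneg _)
  · exact (memLp_two_iff_integrable_sq_norm hsub.1).1 hsub
  · filter_upwards with t
    have := trunc_dist_le (g t) (Q t) (le_of_eq (hQ1 t))
    have h5 : ‖Q t - trunc ((g : ℝ → E) t)‖ ≤ ‖Q t - (g : ℝ → E) t‖ := by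
      rw [norm_sub_rev, norm_sub_rev (Q t)]
      exact this
    simpa using pow_le_pow_left₀ (norm_nonneg _) h5 2

end Trunc
section CL

variable {E : Type*} [NormedAddCommGroup E] [InnerProductSpace ℝ E]

lemma cross_err (γ β : GammaTilde) {e : ℝ → E} (hem : StronglyMeasurable e)
    (heb : ∀ s, ‖e s‖ ≤ 2) {η : ℝ} (hη : 0 ≤ η)
    (hee : ∫ t, ‖e t‖^2 ∂μ01 ≤ η^2) :
    ∫ t, (Real.sqrt (γ.d t) * Real.sqrt (β.d t)) * ‖e (γ.prim t)‖^2 ∂μ01 ≤ 2*η := by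
  set f : ℝ → ℝ := fun t => Real.sqrt (γ.d t) * ‖e (γ.prim t)‖ with hf
  set g : ℝ → ℝ := fun t => Real.sqrt (β.d t) with hg
  have hfm : Measurable f :=
    (Real.continuous_sqrt.measurable.comp γ.measurable_d).mul
      (hem.norm.measurable.comp γ.continuous_prim.measurable)
  have hgm : Measurable g := Real.continuous_sqrt.measurable.comp β.measurable_d
  have hf0 : ∀ t, 0 ≤ f t := fun t => mul_nonneg (Real.sqrt_nonneg _) (norm_nonneg _)
  have hg0 : ∀ t, 0 ≤ g t := fun t => Real.sqrt_nonneg _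
  have hfsq : ∀ t, f t^2 = γ.d t * ‖e (γ.prim t)‖^2 := by
    intro t; rw [hf, mul_pow, Real.sq_sqrt (γ.d_nonneg t)]
  have hgsq : ∀ t, g t^2 = β.d t := fun t => Real.sq_sqrt (β.d_nonneg t)
  have hintf2 : Integrable (fun t => f t^2) μ01 := by
    refine Integrable.mono' (γ.integrable_d_mu.const_mul 4)
      ((hfm.pow_const 2).aestronglyMeasurable) ?_
    filter_upwards with t
    rw [Real.norm_of_nonneg (sq_nonneg _), hfsq]
    have h1 := γ.d_nonneg t
    have h2 := heb (γ.prim t)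
    have h3 := norm_nonneg (e (γ.prim t))
    nlinarith [mul_nonneg h1 (sub_nonneg.2 (by nlinarith : ‖e (γ.prim t)‖^2 ≤ 4))]
  have hintg2 : Integrable (fun t => g t^2) μ01 :=
    β.integrable_d_mu.congr (Filter.Eventually.of_forall (fun t => (hgsq t).symm))
  have hmemf : MemLp f 2 μ01 := memℒp_of_sq_integrable hfm.aestronglyMeasurable hintf2
  have hmemg : MemLp g 2 μ01 := memℒp_of_sq_integrable hgm.aestronglyMeasurable hintg2
  have hCS := integral_CS hmemf hmemg hf0 hg0
  have hcovf : ∫ t, f t^2 ∂μ01 = ∫ t, ‖e t‖^2 ∂μ01 := by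
    rw [integral_congr_ae (Filter.Eventually.of_forall hfsq)]
    exact γ.integral_cov (hem.norm.measurable.pow_const 2) (fun t => sq_nonneg _)
  have hcovg : ∫ t, g t^2 ∂μ01 = 1 := by
    rw [integral_congr_ae (Filter.Eventually.of_forall hgsq), β.integral_d_mu]
  have hsf : Real.sqrt (∫ t, f t^2 ∂μ01) ≤ η := by
    rw [hcovf]
    calc Real.sqrt (∫ t, ‖e t‖^2 ∂μ01) ≤ Real.sqrt (η^2) := Real.sqrt_le_sqrt hee
      _ = η := Real.sqrt_sq hη
  have hfg : ∫ t, f t * g t ∂μ01 ≤ η := by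
    calc ∫ t, f t * g t ∂μ01 ≤ Real.sqrt (∫ t, f t^2 ∂μ01) * Real.sqrt (∫ t, g t^2 ∂μ01) := hCS
      _ = Real.sqrt (∫ t, f t^2 ∂μ01) := by rw [hcovg, Real.sqrt_one, mul_one]
      _ ≤ η := hsf
  have hintfg : Integrable (fun t => f t * g t) μ01 := by
    refine Integrable.mono' ((hintf2.add hintg2).div_const 2)
      ((hfm.mul hgm).aestronglyMeasurable) ?_
    filter_upwards with t
    rw [Real.norm_of_nonneg (mul_nonneg (hf0 t) (hg0 t))]
    simp only [Pi.add_apply]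
    nlinarith [sq_nonneg (f t - g t)]
  have hstep : ∫ t, (Real.sqrt (γ.d t) * Real.sqrt (β.d t)) * ‖e (γ.prim t)‖^2 ∂μ01 ≤
      ∫ t, 2 * (f t * g t) ∂μ01 := by
    apply integral_mono_of_nonneg
    · filter_upwards with t
      exact mul_nonneg (mul_nonneg (Real.sqrt_nonneg _) (Real.sqrt_nonneg _)) (sq_nonneg _)
    · exact hintfg.const_mul 2
    · filter_upwards with t
      have h2 := heb (γ.prim t)
      have h3 := norm_nonneg (e (γ.prim t))
      have h4 := Real.sqrt_nonneg (γ.d t)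
      have h5 := Real.sqrt_nonneg (β.d t)
      simp only [hf, hg]
      nlinarith [mul_nonneg (mul_nonneg (mul_nonneg h4 h5) h3) (sub_nonneg.2 h2)]
  calc ∫ t, (Real.sqrt (γ.d t) * Real.sqrt (β.d t)) * ‖e (γ.prim t)‖^2 ∂μ01
      ≤ ∫ t, 2 * (f t * g t) ∂μ01 := hstep
    _ = 2 * ∫ t, f t * g t ∂μ01 := by rw [integral_const_mul]
    _ ≤ 2 * η := by linarith

lemma CL {Q : ℝ → E} (hQm : StronglyMeasurable Q) (hQ1 : ∀ t, ‖Q t‖ = 1)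
    (β : GammaTilde) {ε : ℝ} (hε : 0 < ε) :
    ∃ ω > 0, ∀ γ : GammaTilde,
      (∀ t ∈ Set.Icc (0:ℝ) 1, |γ.prim t - β.prim t| ≤ ω) →
      ∫ t, (Real.sqrt (γ.d t) * Real.sqrt (β.d t)) *
        ‖Q (γ.prim t) - Q (β.prim t)‖^2 ∂μ01 ≤ ε := by
  obtain ⟨u, hu, hub, hue⟩ := exists_trunc_approx hQm hQ1
    (ε := (ε/18)^2) (by positivity)
  set e : ℝ → E := fun s => Q s - u s with he
  have hem : StronglyMeasurable e := hQm.sub hu.stronglyMeasurable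
  have heb : ∀ s, ‖e s‖ ≤ 2 := by
    intro s
    calc ‖e s‖ ≤ ‖Q s‖ + ‖u s‖ := norm_sub_le _ _
      _ ≤ 1 + 1 := add_le_add (hQ1 s).le (hub s)
      _ = 2 := by norm_num
  have hucont : UniformContinuousOn u (Set.Icc (0:ℝ) 1) :=
    isCompact_Icc.uniformContinuousOn_of_continuous hu.continuousOn
  obtain ⟨ω, hω, hmod⟩ := Metric.uniformContinuousOn_iff_le.1 hucont
    (Real.sqrt (ε/9)) (Real.sqrt_pos.2 (by positivity))
  refine ⟨ω, hω, fun γ hclose => ?_⟩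
  have key : ∀ᵐ t ∂μ01, (Real.sqrt (γ.d t) * Real.sqrt (β.d t)) *
      ‖Q (γ.prim t) - Q (β.prim t)‖^2 ≤
      (Real.sqrt (γ.d t) * Real.sqrt (β.d t)) * (3 * (ε/9)) +
      (3 * ((Real.sqrt (γ.d t) * Real.sqrt (β.d t)) * ‖e (γ.prim t)‖^2) +
       3 * ((Real.sqrt (β.d t) * Real.sqrt (γ.d t)) * ‖e (β.prim t)‖^2)) := by
    have hIcc : ∀ᵐ t ∂μ01, t ∈ Set.Icc (0:ℝ) 1 := ae_restrict_mem measurableSet_Icc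
    filter_upwards [hIcc] with t ht
    have ha := γ.prim_mem t
    have hb := β.prim_mem t
    have hdistab : dist (γ.prim t) (β.prim t) ≤ ω := by
      rw [Real.dist_eq]; exact hclose t ht
    have huab : ‖u (γ.prim t) - u (β.prim t)‖ ≤ Real.sqrt (ε/9) := by
      have := hmod (γ.prim t) ha (β.prim t) hb hdistab
      rwa [dist_eq_norm] at this
    have huab2 : ‖u (γ.prim t) - u (β.prim t)‖^2 ≤ ε/9 := by
      nlinarith [Real.sq_sqrt (by positivity : (0:ℝ) ≤ ε/9), norm_nonneg
        (u (γ.prim t) - u (β.prim t)), Real.sqrt_nonneg (ε/9)]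
    have hdecomp : Q (γ.prim t) - Q (β.prim t) =
        (u (γ.prim t) - u (β.prim t)) + e (γ.prim t) - e (β.prim t) := by
      simp only [he]; abel
    have htri : ‖Q (γ.prim t) - Q (β.prim t)‖ ≤
        ‖u (γ.prim t) - u (β.prim t)‖ + ‖e (γ.prim t)‖ + ‖e (β.prim t)‖ := by
      rw [hdecomp]
      calc ‖(u (γ.prim t) - u (β.prim t)) + e (γ.prim t) - e (β.prim t)‖
          ≤ ‖(u (γ.prim t) - u (β.prim t)) + e (γ.prim t)‖ + ‖e (β.prim t)‖ :=
            norm_sub_le _ _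
        _ ≤ ‖u (γ.prim t) - u (β.prim t)‖ + ‖e (γ.prim t)‖ + ‖e (β.prim t)‖ :=
            add_le_add_left (norm_add_le _ _) _
    have hsq : ‖Q (γ.prim t) - Q (β.prim t)‖^2 ≤
        3 * (‖u (γ.prim t) - u (β.prim t)‖^2 + ‖e (γ.prim t)‖^2 + ‖e (β.prim t)‖^2) := by
      nlinarith [norm_nonneg (Q (γ.prim t) - Q (β.prim t)),
        norm_nonneg (u (γ.prim t) - u (β.prim t)), norm_nonneg (e (γ.prim t)),
        norm_nonneg (e (β.prim t)), sq_nonneg (‖u (γ.prim t) - u (β.prim t)‖ - ‖e (γ.prim t)‖),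
        sq_nonneg (‖u (γ.prim t) - u (β.prim t)‖ - ‖e (β.prim t)‖),
        sq_nonneg (‖e (γ.prim t)‖ - ‖e (β.prim t)‖)]
    have hc0 : 0 ≤ Real.sqrt (γ.d t) * Real.sqrt (β.d t) :=
      mul_nonneg (Real.sqrt_nonneg _) (Real.sqrt_nonneg _)
    have hcomm : Real.sqrt (β.d t) * Real.sqrt (γ.d t) =
        Real.sqrt (γ.d t) * Real.sqrt (β.d t) := mul_comm _ _
    rw [hcomm]
    nlinarith [mul_le_mul_of_nonneg_left hsq hc0, mul_le_mul_of_nonneg_left huab2 hc0]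
  have hint1 : Integrable (fun t => (Real.sqrt (γ.d t) * Real.sqrt (β.d t)) * (3 * (ε/9))) μ01 :=
    (integrable_cross γ β).mul_const _
  have hint2 : Integrable (fun t => (Real.sqrt (γ.d t) * Real.sqrt (β.d t)) *
      ‖e (γ.prim t)‖^2) μ01 := by
    apply integrable_cross_mul (h := fun t => ‖e (γ.prim t)‖^2) γ β
      (((hem.norm.measurable.comp γ.continuous_prim.measurable).pow_const
        2).aestronglyMeasurable) (by norm_num : (0:ℝ) ≤ 4)
    filter_upwards with t
    rw [abs_of_nonneg (sq_nonneg _)]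
    nlinarith [heb (γ.prim t), norm_nonneg (e (γ.prim t))]
  have hint3 : Integrable (fun t => (Real.sqrt (β.d t) * Real.sqrt (γ.d t)) *
      ‖e (β.prim t)‖^2) μ01 := by
    apply integrable_cross_mul (h := fun t => ‖e (β.prim t)‖^2) β γ
      (((hem.norm.measurable.comp β.continuous_prim.measurable).pow_const
        2).aestronglyMeasurable) (by norm_num : (0:ℝ) ≤ 4)
    filter_upwards with t
    rw [abs_of_nonneg (sq_nonneg _)]
    nlinarith [heb (β.prim t), norm_nonneg (e (β.prim t))]
  have hintall : Integrable (fun t => (Real.sqrt (γ.d t) * Real.sqrt (β.d t)) * (3 * (ε/9)) +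
      (3 * ((Real.sqrt (γ.d t) * Real.sqrt (β.d t)) * ‖e (γ.prim t)‖^2) +
       3 * ((Real.sqrt (β.d t) * Real.sqrt (γ.d t)) * ‖e (β.prim t)‖^2))) μ01 :=
    hint1.add ((hint2.const_mul 3).add (hint3.const_mul 3))
  have hmono := integral_mono_of_nonneg
    (Filter.Eventually.of_forall (fun t => mul_nonneg
      (mul_nonneg (Real.sqrt_nonneg _) (Real.sqrt_nonneg _)) (sq_nonneg _)))
    hintall key
  have hcross1 : ∫ t, Real.sqrt (γ.d t) * Real.sqrt (β.d t) ∂μ01 ≤ 1 := by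
    have hb : ∫ t, (γ.d t + β.d t)/2 ∂μ01 = 1 := by
      rw [integral_div, integral_add γ.integrable_d_mu β.integrable_d_mu,
        γ.integral_d_mu, β.integral_d_mu]
      norm_num
    calc ∫ t, Real.sqrt (γ.d t) * Real.sqrt (β.d t) ∂μ01
        ≤ ∫ t, (γ.d t + β.d t)/2 ∂μ01 := by
          apply integral_mono (integrable_cross γ β)
            ((γ.integrable_d_mu.add β.integrable_d_mu).div_const 2)
          intro t
          exact sqrt_mul_le_add (γ.d_nonneg t) (β.d_nonneg t)
      _ = 1 := hb
  have hterm2 := cross_err γ β hem heb (by positivity : (0:ℝ) ≤ ε/18) hue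
  have hterm3 := cross_err β γ hem heb (by positivity : (0:ℝ) ≤ ε/18) hue
  have hsplit : ∫ t, ((Real.sqrt (γ.d t) * Real.sqrt (β.d t)) * (3 * (ε/9)) +
      (3 * ((Real.sqrt (γ.d t) * Real.sqrt (β.d t)) * ‖e (γ.prim t)‖^2) +
       3 * ((Real.sqrt (β.d t) * Real.sqrt (γ.d t)) * ‖e (β.prim t)‖^2))) ∂μ01 =
      (∫ t, (Real.sqrt (γ.d t) * Real.sqrt (β.d t)) * (3 * (ε/9)) ∂μ01) +
      (3 * (∫ t, (Real.sqrt (γ.d t) * Real.sqrt (β.d t)) * ‖e (γ.prim t)‖^2 ∂μ01) +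
       3 * (∫ t, (Real.sqrt (β.d t) * Real.sqrt (γ.d t)) * ‖e (β.prim t)‖^2 ∂μ01)) := by
    have hBC : Integrable (fun t =>
        3 * ((Real.sqrt (γ.d t) * Real.sqrt (β.d t)) * ‖e (γ.prim t)‖^2) +
        3 * ((Real.sqrt (β.d t) * Real.sqrt (γ.d t)) * ‖e (β.prim t)‖^2)) μ01 :=
      (hint2.const_mul 3).add (hint3.const_mul 3)
    rw [integral_add hint1 hBC, integral_add (hint2.const_mul 3) (hint3.const_mul 3),
      integral_const_mul, integral_const_mul]
  have hconst : ∫ t, (Real.sqrt (γ.d t) * Real.sqrt (β.d t)) * (3 * (ε/9)) ∂μ01 ≤ 3 * (ε/9) := by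
    rw [integral_mul_const]
    calc (∫ t, Real.sqrt (γ.d t) * Real.sqrt (β.d t) ∂μ01) * (3 * (ε/9))
        ≤ 1 * (3 * (ε/9)) := by
          apply mul_le_mul_of_nonneg_right hcross1 (by positivity)
      _ = 3 * (ε/9) := one_mul _
  calc ∫ t, (Real.sqrt (γ.d t) * Real.sqrt (β.d t)) *
        ‖Q (γ.prim t) - Q (β.prim t)‖^2 ∂μ01
      ≤ _ := hmono
    _ = _ := hsplit
    _ ≤ 3*(ε/9) + (3 * (2*(ε/18)) + 3 * (2*(ε/18))) := by
        apply add_le_add hconst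
        apply add_le_add
        · apply mul_le_mul_of_nonneg_left hterm2 (by norm_num)
        · apply mul_le_mul_of_nonneg_left hterm3 (by norm_num)
    _ = ε := by ring

end CL
section Perturb

/-- The strictly increasing perturbation `(γ + c·id)/(1+c)` of `γ`. -/
def GammaTilde.perturb (γ : GammaTilde) (c : ℝ) (hc : 0 < c) : GammaTilde where
  toFun := fun t => ∫ u in (0:ℝ)..t, (γ.d u + c)/(1+c)
  deriv' := fun t => (γ.d t + c)/(1+c)
  integrableOn := ((γ.integrable_d.integrableOn.add
    (integrableOn_const (by rw [Real.volume_Icc]; norm_num))).div_const (1+c))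
  nonneg := Filter.Eventually.of_forall fun t => by
    have := γ.d_nonneg t
    show 0 ≤ (γ.d t + c)/(1+c)
    positivity
  map_zero := intervalIntegral.integral_same
  map_one := by
    show (∫ u in (0:ℝ)..1, (γ.d u + c)/(1+c)) = 1
    rw [intervalIntegral.integral_div, intervalIntegral.integral_add
      γ.integrable_d.intervalIntegrable intervalIntegrable_const,
      intervalIntegral.integral_const]
    have : (∫ u in (0:ℝ)..1, γ.d u) = 1 := γ.prim_one
    rw [this]
    simp only [sub_zero, one_smul]
    field_simp
  eq_integral := fun t _ => rfl

namespace GammaTilde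

variable (γ : GammaTilde) {c : ℝ} (hc : 0 < c)

lemma perturb_isInGamma : (γ.perturb c hc).IsInGamma :=
  Filter.Eventually.of_forall fun t => by
    have := γ.d_nonneg t
    show 0 < (γ.d t + c)/(1+c)
    positivity

lemma perturb_d_ae : (γ.perturb c hc).d =ᵐ[μ01] fun t => (γ.d t + c)/(1+c) :=
  (γ.perturb c hc).d_ae_eq

lemma perturb_prim_eq {t : ℝ} (ht : t ∈ Set.Icc (0:ℝ) 1) :
    (γ.perturb c hc).prim t = (γ.prim t + c * t)/(1+c) := by
  rw [(γ.perturb c hc).prim_eq_toFun ht]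
  show (∫ u in (0:ℝ)..t, (γ.d u + c)/(1+c)) = _
  rw [intervalIntegral.integral_div, intervalIntegral.integral_add
    γ.integrable_d.intervalIntegrable intervalIntegrable_const,
    intervalIntegral.integral_const]
  simp only [sub_zero, smul_eq_mul]
  rw [GammaTilde.prim, mul_comm]

lemma perturb_prim_close {t : ℝ} (ht : t ∈ Set.Icc (0:ℝ) 1) :
    |(γ.perturb c hc).prim t - γ.prim t| ≤ c := by
  rw [γ.perturb_prim_eq hc ht]
  have h1 : (γ.prim t + c * t)/(1+c) - γ.prim t = c * (t - γ.prim t) / (1+c) := by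
    field_simp; ring
  rw [h1, abs_div, abs_of_pos (by linarith : (0:ℝ) < 1+c), abs_mul, abs_of_pos hc]
  have hpm := γ.prim_mem t
  have habs : |t - γ.prim t| ≤ 1 := by
    rw [abs_le]
    constructor <;> [nlinarith [ht.1, ht.2, hpm.1, hpm.2]; nlinarith [ht.1, ht.2, hpm.1, hpm.2]]
  rw [div_le_iff₀ (by linarith : (0:ℝ) < 1+c)]
  nlinarith

end GammaTilde

variable {E : Type*} [NormedAddCommGroup E] [InnerProductSpace ℝ E]

lemma one_sub_le_inv_sqrt_one_add {c : ℝ} (hc : 0 < c) :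
    1 - c ≤ 1 / Real.sqrt (1 + c) := by
  have hs : (0:ℝ) < Real.sqrt (1+c) := Real.sqrt_pos.2 (by linarith)
  rw [le_div_iff₀ hs]
  have h1 : Real.sqrt (1+c) ^ 2 = 1 + c := Real.sq_sqrt (by linarith)
  have h2 : (1:ℝ) ≤ Real.sqrt (1+c) := by
    nlinarith [Real.sqrt_nonneg (1+c)]
  nlinarith [sq_nonneg (Real.sqrt (1+c) - 1)]

/-- Key approximation: elements of the `Γ̃`-orbit are approximated by the `Γ`-orbit. -/
lemma approx_orbit {Q q : ℝ → E} (hQm : StronglyMeasurable Q) (hQ1 : ∀ t, ‖Q t‖ = 1)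
    (hq : q =ᵐ[μ01] Q) (γ : GammaTilde) {ε : ℝ} (hε : 0 < ε) :
    ∃ r ∈ orbit q, L2dist r (Af Q γ) < ε := by
  obtain ⟨ω, hω, hCL⟩ := CL hQm hQ1 γ (ε := ε^2/4) (by positivity)
  set c := min ω (ε^2/8) with hcdef
  have hc : 0 < c := lt_min hω (by positivity)
  set δ := γ.perturb c hc with hδ
  have hclose : ∀ t ∈ Set.Icc (0:ℝ) 1, |δ.prim t - γ.prim t| ≤ ω :=
    fun t ht => le_trans (γ.perturb_prim_close hc ht) (min_le_left _ _)
  have hCLδ := hCL δ hclose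
  -- inner product lower bound
  have hinner : (inner ℝ (TT hQm hQ1 δ) (TT hQm hQ1 γ) : ℝ) ≥ (1 - c) - (ε^2/8) := by
    rw [inner_TT hQm hQ1]
    have hpt : ∀ᵐ t ∂μ01, (Real.sqrt (δ.d t) * Real.sqrt (γ.d t)) *
        (inner ℝ (Q (δ.prim t)) (Q (γ.prim t)) : ℝ) =
        Real.sqrt (δ.d t) * Real.sqrt (γ.d t) -
        (Real.sqrt (δ.d t) * Real.sqrt (γ.d t)) * ‖Q (δ.prim t) - Q (γ.prim t)‖^2 / 2 := by
      filter_upwards with t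
      have hid : (inner ℝ (Q (δ.prim t)) (Q (γ.prim t)) : ℝ) =
          1 - ‖Q (δ.prim t) - Q (γ.prim t)‖^2/2 := by
        have := norm_sub_sq_real (Q (δ.prim t)) (Q (γ.prim t))
        rw [hQ1, hQ1] at this
        nlinarith
      rw [hid]; ring
    rw [integral_congr_ae hpt]
    have hi1 : Integrable (fun t => Real.sqrt (δ.d t) * Real.sqrt (γ.d t)) μ01 :=
      integrable_cross δ γ
    have hi2 : Integrable (fun t => (Real.sqrt (δ.d t) * Real.sqrt (γ.d t)) *
        ‖Q (δ.prim t) - Q (γ.prim t)‖^2 / 2) μ01 := by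
      have h := integrable_cross_mul (h := fun t => ‖Q (δ.prim t) - Q (γ.prim t)‖^2) δ γ
        ((((hQm.comp_measurable δ.continuous_prim.measurable).sub
          (hQm.comp_measurable γ.continuous_prim.measurable)).norm.measurable.pow_const
            2).aestronglyMeasurable)
        (by norm_num : (0:ℝ) ≤ 4) ?_
      · exact h.div_const 2
      · filter_upwards with t
        rw [abs_of_nonneg (sq_nonneg _)]
        nlinarith [norm_nonneg (Q (δ.prim t) - Q (γ.prim t)),
          norm_sub_le (Q (δ.prim t)) (Q (γ.prim t)), hQ1 (δ.prim t), hQ1 (γ.prim t)]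
    rw [integral_sub hi1 hi2]
    have hcross_lb : ∫ t, Real.sqrt (δ.d t) * Real.sqrt (γ.d t) ∂μ01 ≥ 1 - c := by
      have hmono : ∫ t, γ.d t / Real.sqrt (1+c) ∂μ01 ≤
          ∫ t, Real.sqrt (δ.d t) * Real.sqrt (γ.d t) ∂μ01 := by
        apply integral_mono_ae (γ.integrable_d_mu.div_const _) hi1
        filter_upwards [γ.perturb_d_ae hc] with t hdt
        rw [← hδ] at hdt
        rw [hdt]
        have h1 : γ.d t / (1+c) ≤ (γ.d t + c)/(1+c) :=
          (div_le_div_iff_of_pos_right (by linarith : (0:ℝ) < 1+c)).2 (by linarith)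
        have h2 : Real.sqrt (γ.d t / (1+c)) ≤ Real.sqrt ((γ.d t + c)/(1+c)) :=
          Real.sqrt_le_sqrt h1
        have h3 : Real.sqrt (γ.d t / (1+c)) = Real.sqrt (γ.d t) / Real.sqrt (1+c) :=
          Real.sqrt_div (γ.d_nonneg t) _
        calc γ.d t / Real.sqrt (1+c)
            = (Real.sqrt (γ.d t) * Real.sqrt (γ.d t)) / Real.sqrt (1+c) := by
              rw [Real.mul_self_sqrt (γ.d_nonneg t)]
          _ = (Real.sqrt (γ.d t) / Real.sqrt (1+c)) * Real.sqrt (γ.d t) := by ring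
          _ = Real.sqrt (γ.d t / (1+c)) * Real.sqrt (γ.d t) := by rw [h3]
          _ ≤ Real.sqrt ((γ.d t + c)/(1+c)) * Real.sqrt (γ.d t) := by
              apply mul_le_mul_of_nonneg_right h2 (Real.sqrt_nonneg _)
      have hval : ∫ t, γ.d t / Real.sqrt (1+c) ∂μ01 = 1 / Real.sqrt (1+c) := by
        rw [integral_div, γ.integral_d_mu]
      have := one_sub_le_inv_sqrt_one_add hc
      calc (1:ℝ) - c ≤ 1 / Real.sqrt (1+c) := this
        _ = ∫ t, γ.d t / Real.sqrt (1+c) ∂μ01 := hval.symm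
        _ ≤ _ := hmono
    have hterm : ∫ t, (Real.sqrt (δ.d t) * Real.sqrt (γ.d t)) *
        ‖Q (δ.prim t) - Q (γ.prim t)‖^2 / 2 ∂μ01 ≤ ε^2/8 := by
      rw [integral_div]
      linarith [hCLδ]
    linarith
  -- distance bound
  have hdistsq : ‖TT hQm hQ1 δ - TT hQm hQ1 γ‖^2 ≤ 2*c + ε^2/4 := by
    have hexp := norm_sub_sq_real (TT hQm hQ1 δ) (TT hQm hQ1 γ)
    rw [norm_TT hQm hQ1, norm_TT hQm hQ1] at hexp
    have hcle : c ≤ ε^2/8 := min_le_right _ _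
    nlinarith
  have hdist : ‖TT hQm hQ1 δ - TT hQm hQ1 γ‖ < ε := by
    have h1 : ‖TT hQm hQ1 δ - TT hQm hQ1 γ‖^2 < ε^2 := by
      have hcle : c ≤ ε^2/8 := min_le_right _ _
      nlinarith
    nlinarith [norm_nonneg (TT hQm hQ1 δ - TT hQm hQ1 γ)]
  refine ⟨Af Q δ, ⟨δ, γ.perturb_isInGamma hc, (act_ae_Af hq δ).symm⟩, ?_⟩
  have heq : L2dist (Af Q δ) (Af Q γ) = ‖TT hQm hQ1 δ - TT hQm hQ1 γ‖ :=
    L2dist_toLp (memℒp_Af hQm hQ1 δ) (memℒp_Af hQm hQ1 γ)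
  rw [heq]
  exact hdist

end Perturb
section Closure

variable {E : Type*} [NormedAddCommGroup E] [InnerProductSpace ℝ E]

lemma integrable_mul_of_sq {f g : ℝ → ℝ} (hfm : AEStronglyMeasurable f μ01)
    (hgm : AEStronglyMeasurable g μ01) (hf2 : Integrable (fun t => f t^2) μ01)
    (hg2 : Integrable (fun t => g t^2) μ01) : Integrable (fun t => f t * g t) μ01 := by
  refine Integrable.mono' ((hf2.add hg2).div_const 2) (hfm.mul hgm) ?_
  filter_upwards with t
  rw [Real.norm_eq_abs, abs_mul]
  simp only [Pi.add_apply]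
  nlinarith [sq_nonneg (|f t| - |g t|), sq_abs (f t), sq_abs (g t), abs_nonneg (f t),
    abs_nonneg (g t)]

lemma dist_prim_le {Q : ℝ → E} (hQm : StronglyMeasurable Q) (hQ1 : ∀ t, ‖Q t‖ = 1)
    {p : ℝ → E} (hpmem : MemLp p 2 μ01) (hp1 : ∫ t, ‖p t‖^2 ∂μ01 = 1)
    {Φ : GammaTilde} (hΦd : Φ.d =ᵐ[μ01] fun t => ‖p t‖^2) (γ : GammaTilde) :
    ∀ t ∈ Set.Icc (0:ℝ) 1, |γ.prim t - Φ.prim t| ≤ 2 * ‖TT hQm hQ1 γ - hpmem.toLp p‖ := by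
  have hpm2 : Integrable (fun t => ‖p t‖^2) μ01 :=
    (memLp_two_iff_integrable_sq_norm hpmem.1).1 hpmem
  set D := ‖TT hQm hQ1 γ - hpmem.toLp p‖ with hD
  have hDnn : 0 ≤ D := norm_nonneg _
  -- the L¹ bound on the difference of the densities
  have hAfmem := memℒp_Af hQm hQ1 γ
  have hfmem : MemLp (fun t => Af Q γ t - p t) 2 μ01 := by
    have := hAfmem.sub hpmem
    exact this.ae_eq (Filter.Eventually.of_forall fun t => by simp [Pi.sub_apply])
  have hDval : Real.sqrt (∫ t, ‖Af Q γ t - p t‖^2 ∂μ01) = D := by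
    rw [hD]
    have h1 := L2dist_toLp (memℒp_Af hQm hQ1 γ) hpmem
    have h2 : L2dist (Af Q γ) p = Real.sqrt (∫ t, ‖Af Q γ t - p t‖^2 ∂μ01) := rfl
    rw [← h2, h1]
    rfl
  have hnormAf : Integrable (fun t => ‖Af Q γ t‖^2) μ01 :=
    γ.integrable_d_mu.congr (Filter.Eventually.of_forall fun t => (Af_norm_sq hQ1 γ t).symm)
  have hintAf1 : ∫ t, ‖Af Q γ t‖^2 ∂μ01 = 1 := by
    rw [integral_congr_ae (Filter.Eventually.of_forall fun t => Af_norm_sq hQ1 γ t),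
      γ.integral_d_mu]
  have hg2int : Integrable (fun t => (‖Af Q γ t‖ + ‖p t‖)^2) μ01 := by
    have : ∀ t, (‖Af Q γ t‖ + ‖p t‖)^2 =
        ‖Af Q γ t‖^2 + 2*(‖Af Q γ t‖*‖p t‖) + ‖p t‖^2 := fun t => by ring
    refine Integrable.congr ?_ (Filter.Eventually.of_forall fun t => (this t).symm)
    exact (hnormAf.add ((integrable_mul_of_sq (hAfmem.1.norm) (hpmem.1.norm) hnormAf
      hpm2).const_mul 2)).add hpm2
  have hg2val : ∫ t, (‖Af Q γ t‖ + ‖p t‖)^2 ∂μ01 ≤ 4 := by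
    have hmono : ∫ t, (‖Af Q γ t‖ + ‖p t‖)^2 ∂μ01 ≤
        ∫ t, 2*(‖Af Q γ t‖^2 + ‖p t‖^2) ∂μ01 := by
      apply integral_mono hg2int ((hnormAf.add hpm2).const_mul 2)
      intro t
      simp only [Pi.add_apply]
      nlinarith [sq_nonneg (‖Af Q γ t‖ - ‖p t‖)]
    rw [integral_const_mul, integral_add hnormAf hpm2, hintAf1, hp1] at hmono
    linarith
  have hL1 : ∫ t, |γ.d t - Φ.d t| ∂μ01 ≤ 2 * D := by
    have hpt : ∀ᵐ t ∂μ01, |γ.d t - Φ.d t| ≤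
        ‖Af Q γ t - p t‖ * (‖Af Q γ t‖ + ‖p t‖) := by
      filter_upwards [hΦd] with t hft
      rw [hft, ← Af_norm_sq hQ1 γ t]
      have h1 : |‖Af Q γ t‖^2 - ‖p t‖^2| =
          |‖Af Q γ t‖ - ‖p t‖| * (‖Af Q γ t‖ + ‖p t‖) := by
        rw [← abs_of_nonneg (add_nonneg (norm_nonneg _) (norm_nonneg _)), ← abs_mul]
        congr 1
        ring
      rw [h1]
      apply mul_le_mul_of_nonneg_right (abs_norm_sub_norm_le _ _)
        (add_nonneg (norm_nonneg _) (norm_nonneg _))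
    have hCS : ∫ t, ‖Af Q γ t - p t‖ * (‖Af Q γ t‖ + ‖p t‖) ∂μ01 ≤
        Real.sqrt (∫ t, ‖Af Q γ t - p t‖^2 ∂μ01) *
        Real.sqrt (∫ t, (‖Af Q γ t‖ + ‖p t‖)^2 ∂μ01) := by
      apply integral_CS (hfmem.norm) ?_ (fun t => norm_nonneg _)
        (fun t => add_nonneg (norm_nonneg _) (norm_nonneg _))
      exact memℒp_of_sq_integrable (hAfmem.1.norm.add hpmem.1.norm) hg2int
    have hintprod : Integrable
        (fun t => ‖Af Q γ t - p t‖ * (‖Af Q γ t‖ + ‖p t‖)) μ01 :=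
      integrable_mul_of_sq hfmem.1.norm (hAfmem.1.norm.add hpmem.1.norm)
        ((memLp_two_iff_integrable_sq_norm hfmem.1).1 hfmem) hg2int
    have h2 : ∫ t, |γ.d t - Φ.d t| ∂μ01 ≤
        ∫ t, ‖Af Q γ t - p t‖ * (‖Af Q γ t‖ + ‖p t‖) ∂μ01 :=
      integral_mono_of_nonneg (Filter.Eventually.of_forall fun t => abs_nonneg _)
        hintprod hpt
    have h3 : Real.sqrt (∫ t, (‖Af Q γ t‖ + ‖p t‖)^2 ∂μ01) ≤ 2 := by
      calc Real.sqrt (∫ t, (‖Af Q γ t‖ + ‖p t‖)^2 ∂μ01) ≤ Real.sqrt 4 :=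
            Real.sqrt_le_sqrt hg2val
        _ = 2 := by
            rw [show (4:ℝ) = 2^2 by norm_num, Real.sqrt_sq (by norm_num : (0:ℝ) ≤ 2)]
    calc ∫ t, |γ.d t - Φ.d t| ∂μ01
        ≤ ∫ t, ‖Af Q γ t - p t‖ * (‖Af Q γ t‖ + ‖p t‖) ∂μ01 := h2
      _ ≤ Real.sqrt (∫ t, ‖Af Q γ t - p t‖^2 ∂μ01) *
          Real.sqrt (∫ t, (‖Af Q γ t‖ + ‖p t‖)^2 ∂μ01) := hCS
      _ ≤ D * 2 := by
          apply mul_le_mul (le_of_eq hDval) h3 (Real.sqrt_nonneg _) hDnn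
      _ = 2 * D := mul_comm _ _
  -- interval integral bound
  intro t ht
  have hii : IntervalIntegrable (fun u => |γ.d u - Φ.d u|) volume 0 t :=
    ((γ.integrable_d.sub Φ.integrable_d).abs).intervalIntegrable
  have hii1 : IntervalIntegrable (fun u => |γ.d u - Φ.d u|) volume t 1 :=
    ((γ.integrable_d.sub Φ.integrable_d).abs).intervalIntegrable
  have hdiff : γ.prim t - Φ.prim t = ∫ u in (0:ℝ)..t, (γ.d u - Φ.d u) := by
    rw [GammaTilde.prim, GammaTilde.prim, ← intervalIntegral.integral_sub
      γ.integrable_d.intervalIntegrable Φ.integrable_d.intervalIntegrable]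
  have habs : |γ.prim t - Φ.prim t| ≤ ∫ u in (0:ℝ)..t, |γ.d u - Φ.d u| := by
    rw [hdiff]
    exact intervalIntegral.abs_integral_le_integral_abs ht.1
  have hsplit : (∫ u in (0:ℝ)..t, |γ.d u - Φ.d u|) + (∫ u in t..(1:ℝ), |γ.d u - Φ.d u|) =
      ∫ u in (0:ℝ)..1, |γ.d u - Φ.d u| :=
    intervalIntegral.integral_add_adjacent_intervals hii hii1
  have hnn : 0 ≤ ∫ u in t..(1:ℝ), |γ.d u - Φ.d u| :=
    intervalIntegral.integral_nonneg (μ := volume) ht.2 (fun u _ => abs_nonneg _)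
  have hfull : (∫ u in (0:ℝ)..1, |γ.d u - Φ.d u|) = ∫ u, |γ.d u - Φ.d u| ∂μ01 := by
    rw [intervalIntegral.integral_of_le zero_le_one, ← integral_Icc_eq_integral_Ioc]
    rfl
  calc |γ.prim t - Φ.prim t| ≤ ∫ u in (0:ℝ)..t, |γ.d u - Φ.d u| := habs
    _ ≤ ∫ u in (0:ℝ)..1, |γ.d u - Φ.d u| := by linarith
    _ = ∫ u, |γ.d u - Φ.d u| ∂μ01 := hfull
    _ ≤ 2 * D := hL1

end Closure
section Limit

variable {E : Type*} [NormedAddCommGroup E] [InnerProductSpace ℝ E]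

lemma inner_TT_ge {Q : ℝ → E} (hQm : StronglyMeasurable Q) (hQ1 : ∀ t, ‖Q t‖ = 1)
    (γ β : GammaTilde) {a s : ℝ}
    (hCLv : ∫ t, (Real.sqrt (γ.d t) * Real.sqrt (β.d t)) *
      ‖Q (γ.prim t) - Q (β.prim t)‖^2 ∂μ01 ≤ a)
    (hSv : s ≤ ∫ t, Real.sqrt (γ.d t) * Real.sqrt (β.d t) ∂μ01) :
    s - a/2 ≤ (inner ℝ (TT hQm hQ1 γ) (TT hQm hQ1 β) : ℝ) := by
  rw [inner_TT hQm hQ1]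
  have hpt : ∀ᵐ t ∂μ01, (Real.sqrt (γ.d t) * Real.sqrt (β.d t)) *
      (inner ℝ (Q (γ.prim t)) (Q (β.prim t)) : ℝ) =
      Real.sqrt (γ.d t) * Real.sqrt (β.d t) -
      (Real.sqrt (γ.d t) * Real.sqrt (β.d t)) * ‖Q (γ.prim t) - Q (β.prim t)‖^2 / 2 := by
    filter_upwards with t
    have hid : (inner ℝ (Q (γ.prim t)) (Q (β.prim t)) : ℝ) =
        1 - ‖Q (γ.prim t) - Q (β.prim t)‖^2/2 := by
      have := norm_sub_sq_real (Q (γ.prim t)) (Q (β.prim t))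
      rw [hQ1, hQ1] at this
      nlinarith
    rw [hid]; ring
  rw [integral_congr_ae hpt]
  have hi1 : Integrable (fun t => Real.sqrt (γ.d t) * Real.sqrt (β.d t)) μ01 :=
    integrable_cross γ β
  have hi2 : Integrable (fun t => (Real.sqrt (γ.d t) * Real.sqrt (β.d t)) *
      ‖Q (γ.prim t) - Q (β.prim t)‖^2 / 2) μ01 := by
    have h := integrable_cross_mul (h := fun t => ‖Q (γ.prim t) - Q (β.prim t)‖^2) γ β
      ((((hQm.comp_measurable γ.continuous_prim.measurable).sub
        (hQm.comp_measurable β.continuous_prim.measurable)).norm.measurable.pow_const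
          2).aestronglyMeasurable)
      (by norm_num : (0:ℝ) ≤ 4) ?_
    · exact h.div_const 2
    · filter_upwards with t
      rw [abs_of_nonneg (sq_nonneg _)]
      nlinarith [norm_nonneg (Q (γ.prim t) - Q (β.prim t)),
        norm_sub_le (Q (γ.prim t)) (Q (β.prim t)), hQ1 (γ.prim t), hQ1 (β.prim t)]
  rw [integral_sub hi1 hi2]
  have h3 : ∫ t, (Real.sqrt (γ.d t) * Real.sqrt (β.d t)) *
      ‖Q (γ.prim t) - Q (β.prim t)‖^2 / 2 ∂μ01 ≤ a/2 := by
    rw [integral_div]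
    linarith
  linarith

lemma mem_orbitTilde_limit {Q : ℝ → E} (hQm : StronglyMeasurable Q) (hQ1 : ∀ t, ‖Q t‖ = 1)
    {p : ℝ → E} (hpmem : MemLp p 2 μ01)
    (happrox : ∀ ε > 0, ∃ γ : GammaTilde, ‖TT hQm hQ1 γ - hpmem.toLp p‖ < ε) :
    ∃ Φ : GammaTilde, p =ᵐ[μ01] Af Q Φ := by
  set P := hpmem.toLp p with hPdef
  have hP1 : ‖P‖ = 1 := by
    have hlt : ∀ ε > 0, |1 - ‖P‖| < ε := by
      intro ε hε
      obtain ⟨γ, hγ⟩ := happrox ε hε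
      calc |1 - ‖P‖| = |‖TT hQm hQ1 γ‖ - ‖P‖| := by rw [norm_TT hQm hQ1]
        _ ≤ ‖TT hQm hQ1 γ - P‖ := abs_norm_sub_norm_le _ _
        _ < ε := hγ
    have h0 : |1 - ‖P‖| ≤ 0 := by
      by_contra hpos
      push_neg at hpos
      exact lt_irrefl _ (hlt _ hpos)
    have := abs_nonneg (1 - ‖P‖)
    have habs : |1 - ‖P‖| = 0 := le_antisymm h0 this
    rw [abs_eq_zero, sub_eq_zero] at habs
    exact habs.symm
  have hp1 : ∫ t, ‖p t‖^2 ∂μ01 = 1 := by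
    have h1 : (inner ℝ P P : ℝ) = 1 := by
      rw [real_inner_self_eq_norm_sq, hP1, one_pow]
    have h2 : (inner ℝ P P : ℝ) = ∫ t, (inner ℝ (p t) (p t) : ℝ) ∂μ01 :=
      inner_toLp hpmem hpmem
    have h3 : ∫ t, (inner ℝ (p t) (p t) : ℝ) ∂μ01 = ∫ t, ‖p t‖^2 ∂μ01 :=
      integral_congr_ae (Filter.Eventually.of_forall fun t =>
        real_inner_self_eq_norm_sq (p t))
    rw [← h3, ← h2, h1]
  have hpint : Integrable (fun t => ‖p t‖^2) μ01 :=
    (memLp_two_iff_integrable_sq_norm hpmem.1).1 hpmem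
  set Φ : GammaTilde :=
    { toFun := fun t => ∫ u in (0:ℝ)..t, ‖p u‖^2
      deriv' := fun t => ‖p t‖^2
      integrableOn := hpint
      nonneg := Filter.Eventually.of_forall fun t => sq_nonneg _
      map_zero := intervalIntegral.integral_same
      map_one := by
        show (∫ u in (0:ℝ)..1, ‖p u‖^2) = 1
        rw [intervalIntegral.integral_of_le zero_le_one, ← integral_Icc_eq_integral_Ioc]
        exact hp1
      eq_integral := fun t _ => rfl } with hΦdef
  have hΦd : Φ.d =ᵐ[μ01] fun t => ‖p t‖^2 := Φ.d_ae_eq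
  refine ⟨Φ, ?_⟩
  have hupper : (inner ℝ P (TT hQm hQ1 Φ) : ℝ) ≤ 1 := by
    calc (inner ℝ P (TT hQm hQ1 Φ) : ℝ) ≤ ‖P‖ * ‖TT hQm hQ1 Φ‖ := real_inner_le_norm _ _
      _ = 1 := by rw [hP1, norm_TT hQm hQ1, one_mul]
  have hlower : ∀ ε > 0, (1:ℝ) - 3*ε ≤ (inner ℝ P (TT hQm hQ1 Φ) : ℝ) := by
    intro ε hε
    obtain ⟨ω, hω, hCL⟩ := CL hQm hQ1 Φ hε
    set ε₂ := min (ω/2) ε with hε₂def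
    have hε₂pos : 0 < ε₂ := lt_min (by linarith) hε
    obtain ⟨γ, hγ⟩ := happrox ε₂ hε₂pos
    have hγ' : ‖TT hQm hQ1 γ - P‖ ≤ ε₂ := hγ.le
    have hclose : ∀ t ∈ Set.Icc (0:ℝ) 1, |γ.prim t - Φ.prim t| ≤ ω := by
      intro t ht
      calc |γ.prim t - Φ.prim t| ≤ 2 * ‖TT hQm hQ1 γ - P‖ :=
            dist_prim_le hQm hQ1 hpmem hp1 hΦd γ t ht
        _ ≤ 2 * ε₂ := by linarith
        _ ≤ ω := by
            have := min_le_left (ω/2) ε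
            have h2 : ε₂ ≤ ω/2 := this
            linarith
    have hCLγ := hCL γ hclose
    -- ⟪TTγ, P⟫ ≥ 1 - ε₂
    have hinP : (1:ℝ) - ε₂ ≤ (inner ℝ (TT hQm hQ1 γ) P : ℝ) := by
      have hsub : (inner ℝ (TT hQm hQ1 γ - P) P : ℝ) =
          (inner ℝ (TT hQm hQ1 γ) P : ℝ) - (inner ℝ P P : ℝ) := inner_sub_left _ _ _
      have hPP : (inner ℝ P P : ℝ) = 1 := by rw [real_inner_self_eq_norm_sq, hP1, one_pow]
      have habs : |(inner ℝ (TT hQm hQ1 γ - P) P : ℝ)| ≤ ‖TT hQm hQ1 γ - P‖ * ‖P‖ :=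
        abs_real_inner_le_norm _ _
      rw [hP1, mul_one] at habs
      have := abs_le.1 habs
      linarith [this.1]
    -- ∫ cross ≥ 1 - ε₂
    have hS : (1:ℝ) - ε₂ ≤ ∫ t, Real.sqrt (γ.d t) * Real.sqrt (Φ.d t) ∂μ01 := by
      have hinP2 : (inner ℝ (TT hQm hQ1 γ) P : ℝ) =
          ∫ t, (inner ℝ (Af Q γ t) (p t) : ℝ) ∂μ01 :=
        inner_toLp (memℒp_Af hQm hQ1 γ) hpmem
      have hae : ∀ᵐ t ∂μ01, (inner ℝ (Af Q γ t) (p t) : ℝ) ≤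
          Real.sqrt (γ.d t) * Real.sqrt (Φ.d t) := by
        filter_upwards [hΦd] with t hft
        have h1 : (inner ℝ (Af Q γ t) (p t) : ℝ) ≤ ‖Af Q γ t‖ * ‖p t‖ := real_inner_le_norm _ _
        have h2 : ‖Af Q γ t‖ = Real.sqrt (γ.d t) := Af_norm hQ1 γ t
        have h3 : Real.sqrt (Φ.d t) = ‖p t‖ := by
          rw [hft, Real.sqrt_sq (norm_nonneg _)]
        rw [h2] at h1
        rw [h3]
        exact h1
      have hiInner : Integrable (fun t => (inner ℝ (Af Q γ t) (p t) : ℝ)) μ01 := by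
        have h := L2.integrable_inner (𝕜 := ℝ) (TT hQm hQ1 γ) P
        apply h.congr
        filter_upwards [(memℒp_Af hQm hQ1 γ).coeFn_toLp, hpmem.coeFn_toLp] with t h1 h2
        rw [← hPdef] at h2
        simp only [TT]
        rw [h1, h2]
      have hmono := integral_mono_ae hiInner (integrable_cross γ Φ) hae
      rw [← hinP2] at hmono
      linarith
    have hTT := inner_TT_ge hQm hQ1 γ Φ hCLγ hS
    -- transfer to P
    have hsub2 : (inner ℝ (TT hQm hQ1 γ - P) (TT hQm hQ1 Φ) : ℝ) =
        (inner ℝ (TT hQm hQ1 γ) (TT hQm hQ1 Φ) : ℝ) - (inner ℝ P (TT hQm hQ1 Φ) : ℝ) :=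
      inner_sub_left _ _ _
    have habs2 : |(inner ℝ (TT hQm hQ1 γ - P) (TT hQm hQ1 Φ) : ℝ)| ≤
        ‖TT hQm hQ1 γ - P‖ * ‖TT hQm hQ1 Φ‖ := abs_real_inner_le_norm _ _
    rw [norm_TT hQm hQ1, mul_one] at habs2
    have h5 := abs_le.1 habs2
    have hε₂le : ε₂ ≤ ε := min_le_right _ _
    have h6 : (inner ℝ P (TT hQm hQ1 Φ) : ℝ) ≥
        (inner ℝ (TT hQm hQ1 γ) (TT hQm hQ1 Φ) : ℝ) - ε₂ := by linarith [h5.2]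
    linarith
  have heq : (inner ℝ P (TT hQm hQ1 Φ) : ℝ) = 1 := by
    apply le_antisymm hupper
    by_contra hlt
    push_neg at hlt
    set a := 1 - (inner ℝ P (TT hQm hQ1 Φ) : ℝ) with hadef
    have ha : 0 < a := by linarith
    have := hlower (a/4) (by linarith)
    linarith
  have hPT : P = TT hQm hQ1 Φ := by
    have hsq : ‖P - TT hQm hQ1 Φ‖^2 = 0 := by
      have := norm_sub_sq_real P (TT hQm hQ1 Φ)
      rw [hP1, norm_TT hQm hQ1, heq] at this
      linarith
    have : ‖P - TT hQm hQ1 Φ‖ = 0 := by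
      nlinarith [norm_nonneg (P - TT hQm hQ1 Φ)]
    rwa [norm_sub_eq_zero_iff] at this
  calc p =ᵐ[μ01] ⇑P := hpmem.coeFn_toLp.symm
    _ = ⇑(TT hQm hQ1 Φ) := by rw [hPT]
    _ =ᵐ[μ01] Af Q Φ := (memℒp_Af hQm hQ1 Φ).coeFn_toLp

end Limit

/-- for `q ∈ L²(I,ℝᴺ)` with `|q(t)| = 1` a.e., the closure of the
`Γ`-orbit of `q` equals the `Γ̃`-orbit: `[q] = qΓ̃`. -/
theorem closed_orbit_eq_semigroup_orbit_unit_speed (N : ℕ) (hN : 1 ≤ N)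
    (q : ℝ → EuclideanSpace ℝ (Fin N)) (hq : MemLp q 2 μ01)
    (hunit : ∀ᵐ t ∂μ01, ‖q t‖ = 1) :
    orbitClosure q = orbitTilde q := by
  obtain ⟨g, hgm, hgq⟩ : ∃ g : ℝ → EuclideanSpace ℝ (Fin N),
      StronglyMeasurable g ∧ q =ᵐ[μ01] g :=
    ⟨hq.1.mk q, hq.1.stronglyMeasurable_mk, hq.1.ae_eq_mk⟩
  set v : EuclideanSpace ℝ (Fin N) := EuclideanSpace.single ⟨0, hN⟩ (1:ℝ) with hv
  have hv1 : ‖v‖ = 1 := by rw [hv, EuclideanSpace.norm_single]; norm_num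
  set S : Set ℝ := {t | ‖g t‖ = 1} with hS
  have hSmeas : MeasurableSet S := hgm.norm.measurable (measurableSet_singleton 1)
  set Q : ℝ → EuclideanSpace ℝ (Fin N) := S.piecewise g (fun _ => v) with hQ
  have hQm : StronglyMeasurable Q :=
    StronglyMeasurable.piecewise hSmeas hgm stronglyMeasurable_const
  have hQ1 : ∀ t, ‖Q t‖ = 1 := by
    intro t
    by_cases h : t ∈ S
    · rw [hQ, Set.piecewise_eq_of_mem _ _ _ h]; exact h
    · rw [hQ, Set.piecewise_eq_of_notMem _ _ _ h]; exact hv1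
  have hqQ : q =ᵐ[μ01] Q := by
    filter_upwards [hgq, hunit] with t h1 h2
    have hmem : t ∈ S := by rw [hS]; show ‖g t‖ = 1; rw [← h1]; exact h2
    rw [hQ, Set.piecewise_eq_of_mem _ _ _ hmem, ← h1]
  ext p
  constructor
  · rintro ⟨hpmem, happrox⟩
    have happrox' : ∀ ε > 0, ∃ γ : GammaTilde, ‖TT hQm hQ1 γ - hpmem.toLp p‖ < ε := by
      intro ε hε
      obtain ⟨r, ⟨γ, hγΓ, hrae⟩, hdist⟩ := happrox ε hε
      refine ⟨γ, ?_⟩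
      have h1 : L2dist r p = L2dist (Af Q γ) p :=
        L2dist_congr (hrae.trans (act_ae_Af hqQ γ)) (Filter.EventuallyEq.refl _ _)
      have h2 : L2dist (Af Q γ) p = ‖(memℒp_Af hQm hQ1 γ).toLp _ - hpmem.toLp p‖ :=
        L2dist_toLp _ hpmem
      rw [h1, h2] at hdist
      exact hdist
    obtain ⟨Φ, hΦ⟩ := mem_orbitTilde_limit hQm hQ1 hpmem happrox'
    exact ⟨Φ, hΦ.trans (act_ae_Af hqQ Φ).symm⟩
  · rintro ⟨γ, hpγ⟩
    have hp' : p =ᵐ[μ01] Af Q γ := hpγ.trans (act_ae_Af hqQ γ)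
    refine ⟨(memℒp_Af hQm hQ1 γ).ae_eq hp'.symm, ?_⟩
    intro ε hε
    obtain ⟨r, hr, hd⟩ := approx_orbit hQm hQ1 hqQ γ hε
    refine ⟨r, hr, ?_⟩
    have heq : L2dist r p = L2dist r (Af Q γ) :=
      L2dist_congr (Filter.EventuallyEq.refl _ _) hp'
    rw [heq]
    exact hd

end
end
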